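/- arXiv:1512.05244 — 12 statements merged into one kernel-verified Lean document; each statement's English description precedes it below -/
import Mathlib

section
/- Let m ≥ 1, let φ_e, φ_r : ℝ → ℝ be differentiable and strictly convex, and let μ_e, μ_r > 0. Assume that for every z ∈ ℝ^m the infimum defining L_e*(z) is attained at a unique point p*(z) ∈ ℝ^m and the infimum defining L_r*(z) is attained at a unique point q*(z) with Σ_{I⊆[m]} q*_I(z) = 1. Then φ_e and φ_r (with μ_e, μ_r) are proportionate for m if and only if for every z ∈ ℝ^m and every i ∈ [m], p*_i(z) = Σ_{I⊆[m], i∈I} q*_I(z). -/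
open Finset

lemma aux_isMin_of_deriv_zero {f : ℝ → ℝ} (hc : ConvexOn ℝ Set.univ f)
    {a : ℝ} (h : HasDerivAt f 0 a) (x : ℝ) : f a ≤ f x := by
  rcases lt_trichotomy x a with hx | rfl | hx
  · have h1 : slope f x a ≤ 0 :=
      hc.slope_le_of_hasDerivAt (Set.mem_univ x) (Set.mem_univ a) hx h
    rw [slope_def_field] at h1
    have h2 : (0:ℝ) < a - x := sub_pos.mpr hx
    nlinarith [(div_le_iff₀ h2).mp h1]
  · exact le_refl _
  · have h1 : (0:ℝ) ≤ slope f a x :=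
      hc.le_slope_of_hasDerivAt (Set.mem_univ a) (Set.mem_univ x) hx h
    rw [slope_def_field] at h1
    have h2 : (0:ℝ) < x - a := sub_pos.mpr hx
    nlinarith [(le_div_iff₀ h2).mp h1]

lemma aux_convex_lin_add (c μ : ℝ) (hμ : 0 ≤ μ) {φ : ℝ → ℝ} (hφ : ConvexOn ℝ Set.univ φ) :
    ConvexOn ℝ Set.univ (fun t => t * c + μ * φ t) := by
  have h1 : ConvexOn ℝ Set.univ (fun t : ℝ => t * c) :=
    ⟨convex_univ, fun x _ y _ a b ha hb hab => by
      simp only [smul_eq_mul]; exact le_of_eq (by ring)⟩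
  have h2 := h1.add (hφ.smul hμ)
  have h3 : (fun t => t * c + μ * φ t) = (fun t => t * c) + fun x => μ • φ x := by
    ext t; simp [smul_eq_mul]
  rw [h3]; exact h2

lemma aux_swap (m : ℕ) (q : Finset (Fin m) → ℝ) (w : Fin m → ℝ) :
    ∑ I : Finset (Fin m), q I * ∑ i ∈ I, w i
      = ∑ i, (∑ I : Finset (Fin m), if i ∈ I then q I else 0) * w i := by
  have h : ∀ I : Finset (Fin m), q I * ∑ i ∈ I, w i
      = ∑ i : Fin m, if i ∈ I then q I * w i else 0 := by
    intro I
    rw [Finset.sum_ite_mem, univ_inter, mul_sum]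
  simp_rw [h]
  rw [Finset.sum_comm]
  refine Finset.sum_congr rfl fun i _ => ?_
  rw [Finset.sum_mul]
  refine Finset.sum_congr rfl fun I _ => ?_
  split <;> simp


/-- The example-side game value
`L_e(p, z) = Σ_{i∈[m]} p_i z_i + μ_e Σ_{i∈[m]} φ_e(p_i)`. -/
noncomputable def gameLe (m : ℕ) (φe : ℝ → ℝ) (μe : ℝ) (p z : Fin m → ℝ) : ℝ :=
  ∑ i, p i * z i + μe * ∑ i, φe (p i)

/-- The rado-side game value
`L_r(q, z) = Σ_{I⊆[m]} q_I Σ_{i∈I} z_i + μ_r Σ_{I⊆[m]} φ_r(q_I)`. -/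
noncomputable def gameLr (m : ℕ) (φr : ℝ → ℝ) (μr : ℝ) (q : Finset (Fin m) → ℝ)
    (z : Fin m → ℝ) : ℝ :=
  ∑ I : Finset (Fin m), q I * ∑ i ∈ I, z i + μr * ∑ I : Finset (Fin m), φr (q I)

/-- Theorem 1 (differentiable case): with `φ_e, φ_r` differentiable and strictly
convex, and the infima defining `L_e*` and `L_r*` attained at unique points
`p*(z)` (resp. `q*(z)` on the hyperplane `Σ_I q_I = 1`), the generators are
proportionate iff `p*(z) = G_m q*(z)`, i.e. `p*_i(z) = Σ_{I ∋ i} q*_I(z)` for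
all `z` and `i`. -/
theorem stmt0 (m : ℕ) (hm : 1 ≤ m) (φe φr : ℝ → ℝ)
    (hφe_diff : Differentiable ℝ φe) (hφr_diff : Differentiable ℝ φr)
    (hφe_conv : StrictConvexOn ℝ Set.univ φe)
    (hφr_conv : StrictConvexOn ℝ Set.univ φr)
    (μe μr : ℝ) (hμe : 0 < μe) (hμr : 0 < μr)
    (pstar : (Fin m → ℝ) → (Fin m → ℝ))
    (qstar : (Fin m → ℝ) → (Finset (Fin m) → ℝ))
    -- the infimum defining `L_e*(z)` is attained at the unique point `p*(z)`
    (hp_min : ∀ z p, gameLe m φe μe (pstar z) z ≤ gameLe m φe μe p z)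
    (hp_uniq : ∀ z p, gameLe m φe μe p z = gameLe m φe μe (pstar z) z → p = pstar z)
    -- the infimum defining `L_r*(z)` is attained at the unique point `q*(z)`,
    -- which satisfies `Σ_{I⊆[m]} q*_I(z) = 1`
    (hq_sum : ∀ z, ∑ I : Finset (Fin m), qstar z I = 1)
    (hq_min : ∀ z q, ∑ I : Finset (Fin m), q I = 1 →
      gameLr m φr μr (qstar z) z ≤ gameLr m φr μr q z)
    (hq_uniq : ∀ z q, ∑ I : Finset (Fin m), q I = 1 →
      gameLr m φr μr q z = gameLr m φr μr (qstar z) z → q = qstar z) :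
    -- proportionate (for this `m`, with these `μ_e, μ_r`) iff `p* = G_m q*`
    (∃ b : ℝ, ∀ z, gameLe m φe μe (pstar z) z = gameLr m φr μr (qstar z) z + b) ↔
    (∀ z (i : Fin m), pstar z i =
      ∑ I : Finset (Fin m), if i ∈ I then qstar z I else 0) := by
  classical
  -- shift formulas
  have gameLe_shift : ∀ (p z z' : Fin m → ℝ),
      gameLe m φe μe p z' = gameLe m φe μe p z + ∑ i, p i * (z' i - z i) := by
    intro p z z'
    have h1 : ∑ i, p i * z' i = ∑ i, p i * z i + ∑ i, p i * (z' i - z i) := by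
      rw [← Finset.sum_add_distrib]
      exact Finset.sum_congr rfl fun i _ => by ring
    simp only [gameLe, h1]; ring
  have gameLr_shift : ∀ (q : Finset (Fin m) → ℝ) (z z' : Fin m → ℝ),
      gameLr m φr μr q z' = gameLr m φr μr q z
        + ∑ i, (∑ I : Finset (Fin m), if i ∈ I then q I else 0) * (z' i - z i) := by
    intro q z z'
    have h1 : ∑ I : Finset (Fin m), q I * ∑ i ∈ I, z' i
        = ∑ I : Finset (Fin m), q I * ∑ i ∈ I, z i
          + ∑ I : Finset (Fin m), q I * ∑ i ∈ I, (z' i - z i) := by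
      rw [← Finset.sum_add_distrib]
      refine Finset.sum_congr rfl fun I _ => ?_
      rw [← mul_add, ← Finset.sum_add_distrib]
      congr 1
      exact Finset.sum_congr rfl fun i _ => by ring
    rw [gameLr, gameLr, h1, aux_swap m q (fun i => z' i - z i)]; ring
  -- supergradient inequalities
  have key_e : ∀ z z' : Fin m → ℝ,
      gameLe m φe μe (pstar z') z' ≤ gameLe m φe μe (pstar z) z
        + ∑ i, pstar z i * (z' i - z i) := by
    intro z z'
    calc gameLe m φe μe (pstar z') z' ≤ gameLe m φe μe (pstar z) z' := hp_min z' (pstar z)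
      _ = _ := gameLe_shift (pstar z) z z'
  have key_r : ∀ z z' : Fin m → ℝ,
      gameLr m φr μr (qstar z') z' ≤ gameLr m φr μr (qstar z) z
        + ∑ i, (∑ I : Finset (Fin m), if i ∈ I then qstar z I else 0) * (z' i - z i) := by
    intro z z'
    calc gameLr m φr μr (qstar z') z' ≤ gameLr m φr μr (qstar z) z' :=
          hq_min z' (qstar z) (hq_sum z)
      _ = _ := gameLr_shift (qstar z) z z'
  constructor
  · -- proportionate ⟹ p* = G q*
    rintro ⟨b, hb⟩ z i
    set v : Fin m → ℝ := fun j => ∑ I : Finset (Fin m), if j ∈ I then qstar z I else 0 with hv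
    have super_f : ∀ z' : Fin m → ℝ,
        gameLe m φe μe (pstar z') z' ≤ gameLe m φe μe (pstar z) z
          + ∑ j, v j * (z' j - z j) := by
      intro z'
      have h' : gameLe m φe μe (pstar z') z' ≤ gameLe m φe μe (pstar z) z
          + ∑ j, (∑ I : Finset (Fin m), if j ∈ I then qstar z I else 0) * (z' j - z j) := by
        rw [hb z', hb z]
        linarith [key_r z z']
      simpa [hv] using h'
    set z₀ : Fin m → ℝ := fun j => -(μe * deriv φe (v j)) with hz₀
    have expand : ∀ p : Fin m → ℝ,
        gameLe m φe μe p z₀ = ∑ j, (p j * z₀ j + μe * φe (p j)) := by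
      intro p
      rw [gameLe, Finset.mul_sum, ← Finset.sum_add_distrib]
    have hmin : ∀ p : Fin m → ℝ, gameLe m φe μe v z₀ ≤ gameLe m φe μe p z₀ := by
      intro p
      rw [expand, expand]
      refine Finset.sum_le_sum fun j _ => ?_
      have hconv := aux_convex_lin_add (z₀ j) μe hμe.le hφe_conv.convexOn
      have hd : HasDerivAt (fun t => t * z₀ j + μe * φe t) 0 (v j) := by
        have hd' := (hasDerivAt_mul_const (z₀ j)).add
          (((hφe_diff (v j)).hasDerivAt).const_mul μe)
        have h0 : z₀ j + μe * deriv φe (v j) = 0 := by simp [hz₀]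
        rw [h0] at hd'
        exact hd'
      exact aux_isMin_of_deriv_zero hconv hd (p j)
    have heq0 : gameLe m φe μe (pstar z₀) z₀ = gameLe m φe μe v z₀ :=
      le_antisymm (hp_min z₀ v) (hmin (pstar z₀))
    have h1 := super_f z₀
    rw [heq0] at h1
    have h2 : gameLe m φe μe v z₀ = gameLe m φe μe v z + ∑ j, v j * (z₀ j - z j) :=
      gameLe_shift v z z₀
    have h3 : gameLe m φe μe v z ≤ gameLe m φe μe (pstar z) z := by linarith
    have h4 : gameLe m φe μe v z = gameLe m φe μe (pstar z) z :=
      le_antisymm h3 (hp_min z v)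
    have h5 : v = pstar z := hp_uniq z v h4
    rw [← h5]
  · -- p* = G q* ⟹ proportionate
    intro hpq
    have Hdiff : ∀ x y : Fin m → ℝ,
        (gameLe m φe μe (pstar y) y - gameLr m φr μr (qstar y) y)
          - (gameLe m φe μe (pstar x) x - gameLr m φr μr (qstar x) x)
        ≤ ∑ i, (pstar x i - pstar y i) * (y i - x i) := by
      intro x y
      have h1 := key_e x y
      have h2 := key_r y x
      have h3 : ∀ i, (∑ I : Finset (Fin m), if i ∈ I then qstar y I else 0) = pstar y i :=
        fun i => (hpq y i).symm
      simp only [h3] at h2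
      have hsum : ∑ i, pstar x i * (y i - x i) + ∑ i, pstar y i * (x i - y i)
          = ∑ i, (pstar x i - pstar y i) * (y i - x i) := by
        rw [← Finset.sum_add_distrib]
        exact Finset.sum_congr rfl fun i _ => by ring
      linarith
    have Hle : ∀ x y : Fin m → ℝ,
        (gameLe m φe μe (pstar y) y - gameLr m φr μr (qstar y) y)
          ≤ (gameLe m φe μe (pstar x) x - gameLr m φr μr (qstar x) x) := by
      intro x y
      set C : ℝ := ∑ i, (pstar x i - pstar y i) * (y i - x i) with hC
      have hbound : ∀ n : ℕ, 1 ≤ n →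
          (gameLe m φe μe (pstar y) y - gameLr m φr μr (qstar y) y)
            - (gameLe m φe μe (pstar x) x - gameLr m φr μr (qstar x) x) ≤ C / n := by
        intro n hn
        have hn0 : (n : ℝ) ≠ 0 := Nat.cast_ne_zero.mpr (by omega)
        set c : ℕ → (Fin m → ℝ) := fun k i => x i + ((k : ℝ) / n) * (y i - x i) with hc
        have hc0 : c 0 = x := funext fun i => by simp [hc]
        have hcn : c n = y := funext fun i => by
          simp only [hc]; field_simp; ring
        have hstep : ∀ k (i : Fin m), c (k + 1) i - c k i = (1 / n) * (y i - x i) := by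
          intro k i
          simp only [hc]
          field_simp
          push_cast
          ring
        set D : ℕ → ℝ := fun k =>
          gameLe m φe μe (pstar (c k)) (c k) - gameLr m φr μr (qstar (c k)) (c k) with hD
        have tele : D n - D 0 = ∑ k ∈ Finset.range n, (D (k + 1) - D k) :=
          (Finset.sum_range_sub D n).symm
        have step_bound : ∀ k, D (k + 1) - D k
            ≤ ∑ i, (pstar (c k) i - pstar (c (k + 1)) i) * ((1 / n) * (y i - x i)) := by
          intro k
          have := Hdiff (c k) (c (k + 1))
          simp only [hstep k] at this
          exact this
        have sum_bound : D n - D 0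
            ≤ ∑ k ∈ Finset.range n, ∑ i,
                (pstar (c k) i - pstar (c (k + 1)) i) * ((1 / n) * (y i - x i)) := by
          rw [tele]
          exact Finset.sum_le_sum fun k _ => step_bound k
        have swap : ∑ k ∈ Finset.range n, ∑ i,
              (pstar (c k) i - pstar (c (k + 1)) i) * ((1 / n) * (y i - x i))
            = ∑ i, (∑ k ∈ Finset.range n, (pstar (c k) i - pstar (c (k + 1)) i))
                * ((1 / n) * (y i - x i)) := by
          rw [Finset.sum_comm]
          exact Finset.sum_congr rfl fun i _ => (Finset.sum_mul _ _ _).symm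
        have tele2 : ∀ i : Fin m,
            ∑ k ∈ Finset.range n, (pstar (c k) i - pstar (c (k + 1)) i)
              = pstar x i - pstar y i := by
          intro i
          have := Finset.sum_range_sub' (fun k => pstar (c k) i) n
          rw [this, hc0, hcn]
        have final : D n - D 0 ≤ C / n := by
          rw [swap] at sum_bound
          simp only [tele2] at sum_bound
          have : ∑ i, (pstar x i - pstar y i) * ((1 / n) * (y i - x i)) = C / n := by
            rw [hC, Finset.sum_div]
            exact Finset.sum_congr rfl fun i _ => by field_simp
          rwa [this] at sum_bound
        rw [hD] at final
        simp only [hc0, hcn] at final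
        exact final
      have hlim := tendsto_const_div_atTop_nhds_zero_nat C
      have hD0 : (gameLe m φe μe (pstar y) y - gameLr m φr μr (qstar y) y)
          - (gameLe m φe μe (pstar x) x - gameLr m φr μr (qstar x) x) ≤ 0 :=
        ge_of_tendsto hlim (Filter.eventually_atTop.2 ⟨1, fun n hn => hbound n hn⟩)
      linarith
    refine ⟨gameLe m φe μe (pstar 0) 0 - gameLr m φr μr (qstar 0) 0, fun z => ?_⟩
    have h1 := Hle 0 z
    have h2 := Hle z 0
    linarith
end

section
/- Let φ_r : ℝ → ℝ ∪ {+∞} be convex and lower semicontinuous with (0,1) contained in its effective domain, let φ_e : ℝ → ℝ ∪ {+∞} be proper, convex and lower semicontinuous, let μ_e, μ_r > 0, and suppose the symmetrisation φ_s(z) := φ_r(z) + φ_r(1−z) is proper, convex and lower semicontinuous. If φ_e and φ_r (with μ_e, μ_r) are proportionate for m = 1 with constant b, then φ_e(z) = (μ_r/μ_e)·φ_s(z) + b/μ_e for all z ∈ ℝ. -/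
/-- Convexity for an `ℝ ∪ {+∞}`-valued function on `ℝ`. -/
def ERealConvex (f : ℝ → EReal) : Prop :=
  ∀ x y a b : ℝ, 0 ≤ a → 0 ≤ b → a + b = 1 →
    f (a * x + b * y) ≤ (a : EReal) * f x + (b : EReal) * f y

section Aux
variable {f : ℝ → EReal}


lemma cancel1 (a : ℝ) (x : EReal) : ((a : EReal) + x) + ((-a : ℝ) : EReal) = x := by
  induction x using EReal.rec with
  | bot => simp
  | coe y => norm_cast; ring
  | top => simp [EReal.coe_add_top]

lemma cancel2 (a : ℝ) (x : EReal) : (x + (a : EReal)) + ((-a : ℝ) : EReal) = x := by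
  rw [add_comm x (a : EReal)]; exact cancel1 a x

lemma coe_le_coe_add_iff (v c : ℝ) (x : EReal) :
    ((v : ℝ) : EReal) ≤ (c : EReal) + x ↔ (((v - c) : ℝ) : EReal) ≤ x := by
  induction x using EReal.rec with
  | bot => simp only [EReal.add_bot, le_bot_iff]; simp [← EReal.coe_sub]
  | coe y => norm_cast; constructor <;> intro h <;> linarith
  | top => simp [EReal.coe_add_top]

lemma coe_mul_ne_bot {c : ℝ} (hc : 0 < c) {x : EReal} (hx : x ≠ ⊥) : (c : EReal) * x ≠ ⊥ := by
  induction x using EReal.rec with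
  | bot => exact absurd rfl hx
  | coe y => rw [← EReal.coe_mul]; exact EReal.coe_ne_bot _
  | top => rw [EReal.coe_mul_top_of_pos hc]; exact top_ne_bot

lemma coe_mul_lt_iff {c : ℝ} (hc : 0 < c) (x y : EReal) :
    (c : EReal) * x < y ↔ x < ((c⁻¹ : ℝ) : EReal) * y := by
  have hc' : (0:ℝ) < c⁻¹ := by positivity
  induction x using EReal.rec with
  | bot =>
    rw [EReal.coe_mul_bot_of_pos hc]
    induction y using EReal.rec with
    | bot => simp [EReal.coe_mul_bot_of_pos hc']
    | coe t => simp [← EReal.coe_mul, bot_lt_iff_ne_bot]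
    | top => simp [EReal.coe_mul_top_of_pos hc']
  | coe s =>
    induction y using EReal.rec with
    | bot => simp [EReal.coe_mul_bot_of_pos hc', ← EReal.coe_mul]
    | coe t =>
      rw [← EReal.coe_mul, ← EReal.coe_mul, EReal.coe_lt_coe_iff, EReal.coe_lt_coe_iff]
      rw [mul_comm c s, ← lt_div_iff₀ hc, div_eq_inv_mul]
    | top => simp [EReal.coe_mul_top_of_pos hc', ← EReal.coe_mul]
  | top =>
    rw [EReal.coe_mul_top_of_pos hc]
    induction y using EReal.rec with
    | bot => simp [EReal.coe_mul_bot_of_pos hc']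
    | coe t => simp [← EReal.coe_mul]
    | top => simp [EReal.coe_mul_top_of_pos hc']

lemma coe_mul_add_coe {a : ℝ} (ha : 0 ≤ a) (c : ℝ) {x : EReal} (hx : x ≠ ⊥) :
    (a : EReal) * (x + (c : EReal)) = (a : EReal) * x + ((a * c : ℝ) : EReal) := by
  induction x using EReal.rec with
  | bot => exact absurd rfl hx
  | coe y => norm_cast; ring
  | top =>
    rcases ha.eq_or_lt with h | h
    · simp [← h]
    · rw [EReal.top_add_of_ne_bot (EReal.coe_ne_bot c), EReal.coe_mul_top_of_pos h,
        EReal.top_add_of_ne_bot (EReal.coe_ne_bot _)]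

-- iInf plus a real constant
lemma iInf_add_coe {ι : Sort*} (h : ι → EReal) (b : ℝ) :
    (⨅ i, h i) + (b : EReal) = ⨅ i, (h i + (b : EReal)) := by
  apply le_antisymm
  · exact le_iInf fun i => add_le_add_left (iInf_le _ i) _
  · have step : (⨅ i, (h i + (b : EReal))) + ((-b : ℝ) : EReal) ≤ ⨅ i, h i :=
      le_iInf fun i => by
        have h1 := add_le_add_left (iInf_le (fun j => h j + (b : EReal)) i) (((-b : ℝ)) : EReal)
        rwa [cancel2 b (h i)] at h1
    have h2 := add_le_add_left step ((b : ℝ) : EReal)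
    have key : ((⨅ i, (h i + (b : EReal))) + ((-b : ℝ) : EReal)) + ((b : ℝ) : EReal)
        = ⨅ i, (h i + (b : EReal)) := by
      have := cancel2 (-b) (⨅ i, (h i + (b : EReal)))
      simpa using this
    rwa [key] at h2

lemma lsc_const_mul {c : ℝ} (hc : 0 < c) (hf : LowerSemicontinuous f) :
    LowerSemicontinuous fun x => (c : EReal) * f x := by
  have hc' : (0:ℝ) < c⁻¹ := by positivity
  intro x₀ y hy
  have hinv : ((c⁻¹⁻¹ : ℝ) : EReal) = ((c : ℝ) : EReal) := by norm_num
  have hy' : ((c⁻¹ : ℝ) : EReal) * y < f x₀ := by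
    rw [coe_mul_lt_iff hc', hinv]; exact hy
  filter_upwards [hf x₀ _ hy'] with x hx
  have h2 := (coe_mul_lt_iff hc' y (f x)).mp hx
  rwa [hinv] at h2

lemma lsc_add_const (b : ℝ) (hf : LowerSemicontinuous f) :
    LowerSemicontinuous fun x => f x + (b : EReal) := by
  intro x₀ y hy
  have hy' : y + ((-b : ℝ) : EReal) < f x₀ := by
    have h1 := EReal.add_lt_add_right_coe hy (-b)
    rwa [cancel2 b (f x₀)] at h1
  filter_upwards [hf x₀ _ hy'] with x hx
  have h2 := EReal.add_lt_add_right_coe hx b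
  have key : (y + ((-b : ℝ) : EReal)) + ((b : ℝ) : EReal) = y := by
    have := cancel2 (-b) y; simpa using this
  rwa [key] at h2


lemma conv_const_mul {c : ℝ} (hc : 0 < c) (hbot : ∀ x, f x ≠ ⊥)
    (hf : ERealConvex f) : ERealConvex fun x => (c : EReal) * f x := by
  intro x y a b ha hb hab
  beta_reduce
  have h := hf x y a b ha hb hab
  have h2 : (c : EReal) * f (a * x + b * y)
      ≤ (c : EReal) * ((a : EReal) * f x + (b : EReal) * f y) :=
    mul_le_mul_of_nonneg_left h (EReal.coe_nonneg.2 hc.le)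
  refine h2.trans (le_of_eq ?_)
  cases hfx : f x with
  | bot => exact absurd hfx (hbot x)
  | coe s =>
    cases hfy : f y with
    | bot => exact absurd hfy (hbot y)
    | coe t => norm_cast; ring
    | top =>
      rcases hb.eq_or_lt with hb0 | hb0
      · simp only [← hb0, EReal.coe_zero, zero_mul, add_zero]
        norm_cast; ring
      · rw [EReal.coe_mul_top_of_pos hb0,
          EReal.add_top_of_ne_bot (show (a:EReal) * (s:EReal) ≠ ⊥ by
            rw [← EReal.coe_mul]; exact EReal.coe_ne_bot _),
          EReal.coe_mul_top_of_pos hc, EReal.coe_mul_top_of_pos hb0,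
          EReal.add_top_of_ne_bot (show (a:EReal) * ((c:EReal) * (s:EReal)) ≠ ⊥ by
            rw [← EReal.coe_mul, ← EReal.coe_mul]; exact EReal.coe_ne_bot _)]
  | top =>
    rcases ha.eq_or_lt with ha0 | ha0
    · simp only [← ha0, EReal.coe_zero, zero_mul, zero_add]
      cases hfy : f y with
      | bot => exact absurd hfy (hbot y)
      | coe t => norm_cast; ring
      | top =>
        have hb1 : (0:ℝ) < b := by linarith
        rw [EReal.coe_mul_top_of_pos hb1, EReal.coe_mul_top_of_pos hc,
          EReal.coe_mul_top_of_pos hb1]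
    · rw [EReal.coe_mul_top_of_pos ha0, EReal.coe_mul_top_of_pos hc,
        EReal.coe_mul_top_of_pos ha0]
      have hby : (b : EReal) * f y ≠ ⊥ := by
        rcases hb.eq_or_lt with hb0 | hb0
        · rw [← hb0]; simp
        · exact coe_mul_ne_bot hb0 (hbot y)
      have hby' : (b : EReal) * ((c : EReal) * f y) ≠ ⊥ := by
        rcases hb.eq_or_lt with hb0 | hb0
        · rw [← hb0]; simp
        · exact coe_mul_ne_bot hb0 (coe_mul_ne_bot hc (hbot y))
      rw [EReal.top_add_of_ne_bot hby, EReal.top_add_of_ne_bot hby', EReal.mul_top_of_pos]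
      exact EReal.coe_pos.2 hc

lemma conv_add_const (b : ℝ) (hbot : ∀ x, f x ≠ ⊥) (hf : ERealConvex f) :
    ERealConvex fun x => f x + (b : EReal) := by
  intro x y a a' ha ha' haa
  have h := hf x y a a' ha ha' haa
  have key : (a : EReal) * (f x + (b : EReal)) + (a' : EReal) * (f y + (b : EReal))
      = ((a : EReal) * f x + (a' : EReal) * f y) + (b : EReal) := by
    rw [coe_mul_add_coe ha b (hbot x), coe_mul_add_coe ha' b (hbot y)]
    have : ((a * b : ℝ) : EReal) + ((a' * b : ℝ) : EReal) = (b : EReal) := by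
      rw [← EReal.coe_add, ← add_mul, haa, one_mul]
    calc ((a:EReal) * f x + ((a*b:ℝ):EReal)) + ((a':EReal) * f y + ((a'*b:ℝ):EReal))
        = ((a:EReal) * f x + (a':EReal) * f y) + (((a*b:ℝ):EReal) + ((a'*b:ℝ):EReal)) := by
          abel
      _ = ((a:EReal) * f x + (a':EReal) * f y) + (b : EReal) := by rw [this]
  rw [key]
  exact add_le_add_left h _

lemma biconj (hbot : ∀ x, f x ≠ ⊥) (hproper : ∃ x, f x ≠ ⊤)
    (hconv : ERealConvex f) (hlsc : LowerSemicontinuous f)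
    (sep : ∀ p₀ r : ℝ, (r : EReal) < f p₀ →
      ∃ z v : ℝ, (∀ p : ℝ, (((v - p * z) : ℝ) : EReal) ≤ f p) ∧ r < v - p₀ * z)
    (p₀ : ℝ) :
    f p₀ = ⨆ z : ℝ, (⨅ p : ℝ, (((p * z) : ℝ) : EReal) + f p) + (((-(p₀ * z)) : ℝ) : EReal) := by
  apply le_antisymm
  · by_contra hcon
    push_neg at hcon
    obtain ⟨r, hr1, hr2⟩ := EReal.exists_between_coe_real hcon
    obtain ⟨z, v, hmin, hval⟩ := sep p₀ r hr2
    have hA : (v : EReal) ≤ ⨅ p : ℝ, (((p * z) : ℝ) : EReal) + f p := by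
      refine le_iInf fun p => ?_
      rw [coe_le_coe_add_iff]
      exact hmin p
    have hterm : ((v - p₀ * z : ℝ) : EReal)
        ≤ (⨅ p : ℝ, (((p * z) : ℝ) : EReal) + f p) + (((-(p₀ * z)) : ℝ) : EReal) := by
      have := add_le_add_left hA (((-(p₀ * z)) : ℝ) : EReal)
      refine le_trans (le_of_eq ?_) this
      rw [← EReal.coe_add]
      exact EReal.coe_eq_coe_iff.mpr (by ring)
    have hle : ((v - p₀ * z : ℝ) : EReal)
        ≤ ⨆ z : ℝ, (⨅ p : ℝ, (((p * z) : ℝ) : EReal) + f p) + (((-(p₀ * z)) : ℝ) : EReal) :=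
      hterm.trans (le_iSup (fun w : ℝ => (⨅ p : ℝ, (((p * w) : ℝ) : EReal) + f p) + (((-(p₀ * w)) : ℝ) : EReal)) z)
    have hfin : ((v - p₀ * z : ℝ) : EReal) < ((v - p₀ * z : ℝ) : EReal) :=
      lt_of_le_of_lt hle (lt_of_lt_of_le hr1 (by exact_mod_cast hval.le))
    exact absurd hfin (lt_irrefl _)
  · refine iSup_le fun z => ?_
    have h1 : (⨅ p : ℝ, (((p * z) : ℝ) : EReal) + f p) ≤ ((p₀ * z : ℝ) : EReal) + f p₀ :=
      iInf_le _ p₀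
    have h2 := add_le_add_left h1 (((-(p₀ * z)) : ℝ) : EReal)
    rwa [cancel1 (p₀ * z) (f p₀)] at h2

end Aux



def Epi (f : ℝ → EReal) : Set (ℝ × ℝ) := {x | f x.1 ≤ (x.2 : EReal)}

lemma epi_closed {f : ℝ → EReal} (hlsc : LowerSemicontinuous f) : IsClosed (Epi f) := by
  have h1 : IsClosed {p : ℝ × EReal | f p.1 ≤ p.2} := hlsc.isClosed_epigraph
  have h2 : Epi f = (fun x : ℝ × ℝ => (x.1, (x.2 : EReal))) ⁻¹' {p : ℝ × EReal | f p.1 ≤ p.2} :=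
    rfl
  rw [h2]
  exact h1.preimage (continuous_fst.prodMk (continuous_coe_real_ereal.comp continuous_snd))

lemma epi_convex {f : ℝ → EReal} (hconv : ERealConvex f) : Convex ℝ (Epi f) := by
  rintro x hx y hy a b ha hb hab
  simp only [Epi, Set.mem_setOf_eq] at *
  have h := hconv x.1 y.1 a b ha hb hab
  have hgoal : (a • x + b • y).1 = a * x.1 + b * y.1 := by simp
  have hgoal2 : (a • x + b • y).2 = a * x.2 + b * y.2 := by simp
  rw [hgoal, hgoal2]
  calc f (a * x.1 + b * y.1) ≤ (a : EReal) * f x.1 + (b : EReal) * f y.1 := h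
    _ ≤ (a : EReal) * (x.2 : EReal) + (b : EReal) * (y.2 : EReal) := by
        exact add_le_add (mul_le_mul_of_nonneg_left hx (EReal.coe_nonneg.2 ha))
          (mul_le_mul_of_nonneg_left hy (EReal.coe_nonneg.2 hb))
    _ = (((a * x.2 + b * y.2) : ℝ) : EReal) := by norm_cast

lemma sep_raw {f : ℝ → EReal} (hconv : ERealConvex f) (hlsc : LowerSemicontinuous f)
    (p₀ r : ℝ) (h : (r : EReal) < f p₀) :
    ∃ α β u : ℝ, (∀ p t : ℝ, f p ≤ (t : EReal) → α * p + β * t < u) ∧ u < α * p₀ + β * r := by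
  have hnotin : (p₀, r) ∉ Epi f := fun hh => absurd hh (not_le.2 h)
  obtain ⟨L, u, hL1, hL2⟩ :=
    geometric_hahn_banach_closed_point (epi_convex hconv) (epi_closed hlsc) hnotin
  have key : ∀ p t : ℝ, L (p, t) = L (1, 0) * p + L (0, 1) * t := by
    intro p t
    have hpt : ((p, t) : ℝ × ℝ) = p • ((1:ℝ), (0:ℝ)) + t • ((0:ℝ), (1:ℝ)) := by
      simp [Prod.ext_iff]
    rw [hpt, map_add, map_smul, map_smul, smul_eq_mul, smul_eq_mul]; ring
  refine ⟨L (1, 0), L (0, 1), u, ?_, ?_⟩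
  · intro p t hpt
    have := hL1 (p, t) hpt
    rwa [key] at this
  · have := hL2
    rwa [key] at this

lemma exists_minorant_aux {f : ℝ → EReal} (hbot : ∀ x, f x ≠ ⊥)
    (hconv : ERealConvex f) (hlsc : LowerSemicontinuous f)
    (x₁ s₁ : ℝ) (hx₁ : f x₁ = (s₁ : EReal)) :
    ∃ z v : ℝ, ∀ p : ℝ, (((v - p * z) : ℝ) : EReal) ≤ f p := by
  have hlt : ((s₁ - 1 : ℝ) : EReal) < f x₁ := by
    rw [hx₁]; exact_mod_cast sub_one_lt s₁
  obtain ⟨α, β, u, H1, H2⟩ := sep_raw hconv hlsc x₁ (s₁ - 1) hlt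
  have hβ : β < 0 := by
    have h1 := H1 x₁ s₁ (le_of_eq hx₁)
    nlinarith
  refine ⟨α / β, u / β, fun p => ?_⟩
  cases hfp : f p with
  | bot => exact absurd hfp (hbot p)
  | top => exact le_top
  | coe s =>
    have h1 := H1 p s (le_of_eq hfp)
    rw [EReal.coe_le_coe_iff]
    have key : u / β - p * (α / β) = (u - α * p) / β := by field_simp
    rw [key, div_le_iff_of_neg hβ]
    nlinarith

lemma exists_sep {f : ℝ → EReal} (hbot : ∀ x, f x ≠ ⊥) (hproper : ∃ x, f x ≠ ⊤)
    (hconv : ERealConvex f) (hlsc : LowerSemicontinuous f) (p₀ r : ℝ)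
    (h : (r : EReal) < f p₀) :
    ∃ z v : ℝ, (∀ p : ℝ, (((v - p * z) : ℝ) : EReal) ≤ f p) ∧ r < v - p₀ * z := by
  obtain ⟨x₁, hx₁⟩ := hproper
  obtain ⟨s₁, hs₁⟩ : ∃ s₁ : ℝ, f x₁ = (s₁ : EReal) := by
    cases hfx : f x₁ with
    | bot => exact absurd hfx (hbot x₁)
    | top => exact absurd hfx hx₁
    | coe s => exact ⟨s, rfl⟩
  obtain ⟨z₁, v₁, hmin⟩ := exists_minorant_aux hbot hconv hlsc x₁ s₁ hs₁
  obtain ⟨α, β, u, H1, H2⟩ := sep_raw hconv hlsc p₀ r h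
  have hβ : β ≤ 0 := by
    by_contra hβ'
    push_neg at hβ'
    set t := max s₁ ((u - α * x₁) / β) with ht
    have h1 := H1 x₁ t (by rw [hs₁]; exact_mod_cast le_max_left _ _)
    have h2 : (u - α * x₁) / β ≤ t := le_max_right _ _
    rw [div_le_iff₀ hβ'] at h2
    nlinarith
  rcases lt_or_eq_of_le hβ with hβneg | hβzero
  · refine ⟨α / β, u / β, fun p => ?_, ?_⟩
    · cases hfp : f p with
      | bot => exact absurd hfp (hbot p)
      | top => exact le_top
      | coe s =>
        have h1 := H1 p s (le_of_eq hfp)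
        rw [EReal.coe_le_coe_iff]
        have key : u / β - p * (α / β) = (u - α * p) / β := by field_simp
        rw [key, div_le_iff_of_neg hβneg]
        nlinarith
    · have key : u / β - p₀ * (α / β) = (u - α * p₀) / β := by field_simp
      rw [key, lt_div_iff_of_neg hβneg]
      nlinarith
  · -- β = 0
    rw [hβzero] at H2
    have hd : 0 < α * p₀ - u := by nlinarith
    set d := α * p₀ - u with hdd
    set c := v₁ - p₀ * z₁ with hcc
    set lam := (|r - c| + 1) / d with hlam
    have hlam0 : 0 ≤ lam := by positivity
    refine ⟨z₁ - lam * α, v₁ - lam * u, fun p => ?_, ?_⟩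
    · cases hfp : f p with
      | bot => exact absurd hfp (hbot p)
      | top => exact le_top
      | coe s =>
        have hs : v₁ - p * z₁ ≤ s := by
          have := hmin p; rw [hfp] at this; exact_mod_cast this
        have hα : α * p + β * s < u := H1 p s (le_of_eq hfp)
        rw [hβzero] at hα
        have hα' : α * p < u := by linarith
        rw [EReal.coe_le_coe_iff]
        nlinarith [mul_nonneg hlam0 (by linarith : (0:ℝ) ≤ u - α * p)]
    · have hld : lam * d = |r - c| + 1 := by
        rw [hlam]; field_simp
      have habs : r - c ≤ |r - c| := le_abs_self _
      nlinarith [hld, habs]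

/-- Lemma 2: if `φ_e` and `φ_r` (with parameters `μ_e, μ_r`) are proportionate
for `m = 1` with constant `b`, then `φ_e = (μ_r/μ_e)·φ_s + b/μ_e`, where
`φ_s(z) = φ_r(z) + φ_r(1−z)` is the symmetrisation of `φ_r`.

For `m = 1` the two game values are `L_e(p, z) = p z + μ_e φ_e(p)` over `p ∈ ℝ`
and `L_r(q, z) = q_{{1}} z + μ_r (φ_r(q_∅) + φ_r(q_{{1}}))` over
`q = (q_∅, q_{{1}})` with `q_∅ + q_{{1}} = 1`. -/
theorem stmt3 (φe φr : ℝ → EReal)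
    (hφr_ne_bot : ∀ z, φr z ≠ ⊥)
    (hφr_conv : ERealConvex φr) (hφr_lsc : LowerSemicontinuous φr)
    (hφr_dom : ∀ z ∈ Set.Ioo (0 : ℝ) 1, φr z ≠ ⊤)
    (hφe_ne_bot : ∀ z, φe z ≠ ⊥) (hφe_proper : ∃ z, φe z ≠ ⊤)
    (hφe_conv : ERealConvex φe) (hφe_lsc : LowerSemicontinuous φe)
    (φs : ℝ → EReal) (hφs : ∀ z, φs z = φr z + φr (1 - z))
    (hφs_ne_bot : ∀ z, φs z ≠ ⊥) (hφs_proper : ∃ z, φs z ≠ ⊤)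
    (hφs_conv : ERealConvex φs) (hφs_lsc : LowerSemicontinuous φs)
    (μe μr : ℝ) (hμe : 0 < μe) (hμr : 0 < μr) (b : ℝ)
    -- proportionate for `m = 1` with constant `b`
    (hprop : ∀ z : ℝ,
      (⨅ p : ℝ, (((p * z : ℝ)) : EReal) + (μe : EReal) * φe p) =
      (⨅ q : {q : ℝ × ℝ // q.1 + q.2 = 1},
        (((q.1.2 * z : ℝ)) : EReal) + (μr : EReal) * (φr q.1.1 + φr q.1.2)) +
        (b : EReal)) :
    ∀ z : ℝ, φe z = ((μr / μe : ℝ) : EReal) * φs z + ((b / μe : ℝ) : EReal) := by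
  -- Define the two scaled functions
  set F : ℝ → EReal := fun p => (μe : EReal) * φe p with hF
  set G : ℝ → EReal := fun t => (μr : EReal) * φs t + (b : EReal) with hG
  have hFbot : ∀ p, F p ≠ ⊥ := fun p => coe_mul_ne_bot hμe (hφe_ne_bot p)
  have hFproper : ∃ p, F p ≠ ⊤ := by
    obtain ⟨z₀, hz₀⟩ := hφe_proper
    obtain ⟨s, hs⟩ : ∃ s : ℝ, φe z₀ = (s : EReal) := by
      cases hfy : φe z₀ with
      | bot => exact absurd hfy (hφe_ne_bot z₀)
      | top => exact absurd hfy hz₀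
      | coe s => exact ⟨s, rfl⟩
    exact ⟨z₀, by rw [hF]; beta_reduce; rw [hs, ← EReal.coe_mul]; exact EReal.coe_ne_top _⟩
  have hFconv : ERealConvex F := conv_const_mul hμe hφe_ne_bot hφe_conv
  have hFlsc : LowerSemicontinuous F := lsc_const_mul hμe hφe_lsc
  have hBbot : ∀ t, (μr : EReal) * φs t ≠ ⊥ := fun t => coe_mul_ne_bot hμr (hφs_ne_bot t)
  have hGbot : ∀ t, G t ≠ ⊥ := by
    intro t
    rw [hG]; beta_reduce
    cases hx : (μr : EReal) * φs t with
    | bot => exact absurd hx (hBbot t)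
    | coe s => rw [← EReal.coe_add]; exact EReal.coe_ne_bot _
    | top => rw [EReal.top_add_of_ne_bot (EReal.coe_ne_bot b)]; exact top_ne_bot
  have hGproper : ∃ t, G t ≠ ⊤ := by
    obtain ⟨z₀, hz₀⟩ := hφs_proper
    obtain ⟨s, hs⟩ : ∃ s : ℝ, φs z₀ = (s : EReal) := by
      cases hfy : φs z₀ with
      | bot => exact absurd hfy (hφs_ne_bot z₀)
      | top => exact absurd hfy hz₀
      | coe s => exact ⟨s, rfl⟩
    have hfin : G z₀ ≠ ⊤ := by
      rw [hG]; beta_reduce; rw [hs, ← EReal.coe_mul, ← EReal.coe_add]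
      exact EReal.coe_ne_top _
    exact ⟨z₀, hfin⟩
  have hGconv : ERealConvex G :=
    conv_add_const b hBbot (conv_const_mul hμr hφs_ne_bot hφs_conv)
  have hGlsc : LowerSemicontinuous G := lsc_add_const b (lsc_const_mul hμr hφs_lsc)
  -- the two conjugates agree
  have hinf : ∀ z : ℝ,
      (⨅ p : ℝ, (((p * z) : ℝ) : EReal) + F p) = ⨅ t : ℝ, (((t * z) : ℝ) : EReal) + G t := by
    intro z
    have hsurj : Function.Surjective
        (fun t : ℝ => (⟨(1 - t, t), by ring⟩ : {q : ℝ × ℝ // q.1 + q.2 = 1})) := by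
      rintro ⟨⟨q1, q2⟩, hq⟩
      refine ⟨q2, ?_⟩
      simp only [Subtype.mk.injEq, Prod.mk.injEq]
      constructor
      · simp only at hq; linarith
      · trivial
    have hq : (⨅ q : {q : ℝ × ℝ // q.1 + q.2 = 1},
          (((q.1.2 * z : ℝ)) : EReal) + (μr : EReal) * (φr q.1.1 + φr q.1.2))
        = ⨅ t : ℝ, (((t * z : ℝ)) : EReal) + (μr : EReal) * φs t := by
      rw [← hsurj.iInf_comp (fun q : {q : ℝ × ℝ // q.1 + q.2 = 1} =>
        (((q.1.2 * z : ℝ)) : EReal) + (μr : EReal) * (φr q.1.1 + φr q.1.2))]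
      exact iInf_congr fun t => by rw [hφs t, add_comm (φr t)]
    have h1 := hprop z
    rw [hq, iInf_add_coe] at h1
    calc (⨅ p : ℝ, (((p * z) : ℝ) : EReal) + F p)
        = ⨅ t : ℝ, ((((t * z : ℝ)) : EReal) + (μr : EReal) * φs t) + (b : EReal) := h1
      _ = ⨅ t : ℝ, (((t * z) : ℝ) : EReal) + G t := iInf_congr fun t => by
          rw [hG]; beta_reduce; rw [add_assoc]
  -- biconjugation
  have hFG : ∀ z : ℝ, F z = G z := by
    intro z
    have h1 := biconj hFbot hFproper hFconv hFlsc (exists_sep hFbot hFproper hFconv hFlsc) z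
    have h2 := biconj hGbot hGproper hGconv hGlsc (exists_sep hGbot hGproper hGconv hGlsc) z
    rw [h1, h2]
    exact iSup_congr fun w => by rw [hinf w]
  -- unpack the scaling
  intro z
  have h := hFG z
  rw [hF, hG] at h
  beta_reduce at h
  have hpos : (0:ℝ) < μr / μe := div_pos hμr hμe
  cases hφsz : φs z with
  | bot => exact absurd hφsz (hφs_ne_bot z)
  | top =>
    rw [hφsz, EReal.coe_mul_top_of_pos hμr, EReal.top_add_of_ne_bot (EReal.coe_ne_bot b)] at h
    have hφez : φe z = ⊤ := by
      cases hφez : φe z with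
      | bot => exact absurd hφez (hφe_ne_bot z)
      | coe u => rw [hφez, ← EReal.coe_mul] at h; exact absurd h (EReal.coe_ne_top _)
      | top => rfl
    rw [hφez, EReal.coe_mul_top_of_pos hpos, EReal.top_add_of_ne_bot (EReal.coe_ne_bot _)]
  | coe s =>
    rw [hφsz, ← EReal.coe_mul, ← EReal.coe_add] at h
    cases hφez : φe z with
    | bot => exact absurd hφez (hφe_ne_bot z)
    | top =>
      rw [hφez, EReal.coe_mul_top_of_pos hμe] at h
      exact absurd h.symm (EReal.coe_ne_top _)
    | coe u =>
      rw [hφez, ← EReal.coe_mul] at h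
      have hu : μe * u = μr * s + b := EReal.coe_eq_coe_iff.mp h
      rw [← EReal.coe_mul, ← EReal.coe_add, EReal.coe_eq_coe_iff]
      field_simp
      linarith
end

section
/- Fix μ > 0 and an integer m ≥ 1. Then there exists b ∈ ℝ, not depending on z, such that for all z ∈ ℝ^m: inf over p ∈ (0,1)^m of [ Σ_{i∈[m]} p_i z_i + μ Σ_{i∈[m]} ( p_i log p_i + (1−p_i) log(1−p_i) − 1 ) ] equals b plus inf over q with q_I > 0 for all I ⊆ [m] and Σ_{I⊆[m]} q_I = 1 of [ Σ_{I⊆[m]} q_I Σ_{i∈I} z_i + μ Σ_{I⊆[m]} ( q_I log q_I − q_I ) ]. In other words, the generator φ_r(z) = z log z − z is proportionate (with μ_e = μ_r = μ) to its symmetrisation φ_e(z) = z log z + (1−z) log(1−z) − 1. -/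
private lemma gibbs {x y : ℝ} (hx : 0 < x) (hy : 0 < y) :
    x - y ≤ x * Real.log x - x * Real.log y := by
  have h := Real.log_le_sub_one_of_pos (div_pos hy hx)
  rw [Real.log_div hy.ne' hx.ne'] at h
  have h2 : x * (y / x - 1) = y - x := by field_simp
  have h3 := mul_le_mul_of_nonneg_left h hx.le
  rw [h2] at h3
  nlinarith [h3]

private lemma onedim_le {μ : ℝ} (hμ : 0 < μ) (z p : ℝ) (hp0 : 0 < p) (hp1 : p < 1) :
    -(μ * Real.log (1 + Real.exp (-(z/μ)))) ≤
      p * z + μ * (p * Real.log p + (1-p) * Real.log (1-p)) := by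
  set r : ℝ := Real.exp (-(z/μ)) with hr
  have hrpos : 0 < r := Real.exp_pos _
  have hZ : (0:ℝ) < 1 + r := by linarith
  have ha0 : 0 < r / (1 + r) := div_pos hrpos hZ
  have ha1 : r / (1 + r) < 1 := (div_lt_one hZ).2 (by linarith)
  set a : ℝ := r / (1 + r) with hadef
  have hla : Real.log a = -(z/μ) - Real.log (1 + r) := by
    rw [hadef, Real.log_div hrpos.ne' hZ.ne', hr, Real.log_exp]
  have h1a : 1 - a = 1 / (1 + r) := by rw [hadef]; field_simp; ring
  have hl1a : Real.log (1 - a) = -Real.log (1 + r) := by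
    rw [h1a, Real.log_div one_ne_zero hZ.ne', Real.log_one]; ring
  have g1 := gibbs hp0 ha0
  have g2 := gibbs (by linarith : (0:ℝ) < 1 - p) (by linarith : (0:ℝ) < 1 - a)
  rw [hla] at g1
  rw [hl1a] at g2
  have key : 0 ≤ p * Real.log p + (1-p) * Real.log (1-p) + p * (z/μ) + Real.log (1 + r) := by
    nlinarith [g1, g2]
  have := mul_le_mul_of_nonneg_left key hμ.le
  have hz : μ * (p * (z/μ)) = p * z := by field_simp
  nlinarith [this]

private lemma onedim_eq {μ : ℝ} (hμ : 0 < μ) (z : ℝ) :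
    (Real.exp (-(z/μ)) / (1 + Real.exp (-(z/μ)))) * z +
      μ * ((Real.exp (-(z/μ)) / (1 + Real.exp (-(z/μ)))) *
            Real.log (Real.exp (-(z/μ)) / (1 + Real.exp (-(z/μ)))) +
          (1 - Real.exp (-(z/μ)) / (1 + Real.exp (-(z/μ)))) *
            Real.log (1 - Real.exp (-(z/μ)) / (1 + Real.exp (-(z/μ))))) =
      -(μ * Real.log (1 + Real.exp (-(z/μ)))) := by
  set r : ℝ := Real.exp (-(z/μ)) with hr
  have hrpos : 0 < r := Real.exp_pos _
  have hZ : (0:ℝ) < 1 + r := by linarith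
  set a : ℝ := r / (1 + r) with hadef
  have hla : Real.log a = -(z/μ) - Real.log (1 + r) := by
    rw [hadef, Real.log_div hrpos.ne' hZ.ne', hr, Real.log_exp]
  have h1a : 1 - a = 1 / (1 + r) := by rw [hadef]; field_simp; ring
  have hl1a : Real.log (1 - a) = -Real.log (1 + r) := by
    rw [h1a, Real.log_div one_ne_zero hZ.ne', Real.log_one]; ring
  rw [hla, hl1a]
  have : a * (-(z/μ)) * μ = -(a * z) := by field_simp
  nlinarith [this]

private lemma qside_le {μ : ℝ} (hμ : 0 < μ) {ι : Type*} [Fintype ι] [Nonempty ι]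
    (s : ι → ℝ) (q : ι → ℝ) (hq : ∀ I, 0 < q I) (hsum : ∑ I, q I = 1) :
    -(μ * Real.log (∑ I, Real.exp (-(s I / μ)))) - μ ≤
      ∑ I, q I * s I + μ * ∑ I, (q I * Real.log (q I) - q I) := by
  set Z : ℝ := ∑ I, Real.exp (-(s I / μ)) with hZdef
  have hZ : 0 < Z := Finset.sum_pos (fun I _ => Real.exp_pos _) Finset.univ_nonempty
  have key := Finset.sum_le_sum (fun I (_ : I ∈ Finset.univ) =>
    gibbs (hq I) (div_pos (Real.exp_pos (-(s I / μ))) hZ))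
  have hL : ∑ I, (q I - Real.exp (-(s I / μ)) / Z) = 0 := by
    rw [Finset.sum_sub_distrib, hsum, ← Finset.sum_div, ← hZdef, div_self hZ.ne']
    ring
  have hR : ∑ I, (q I * Real.log (q I) - q I * Real.log (Real.exp (-(s I / μ)) / Z)) =
      ∑ I, q I * Real.log (q I) + (∑ I, q I * s I) / μ + Real.log Z := by
    have : ∀ I : ι, q I * Real.log (q I) - q I * Real.log (Real.exp (-(s I / μ)) / Z) =
        q I * Real.log (q I) + q I * s I / μ + q I * Real.log Z := by
      intro I
      rw [Real.log_div (Real.exp_pos _).ne' hZ.ne', Real.log_exp]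
      ring
    rw [Finset.sum_congr rfl (fun I _ => this I), Finset.sum_add_distrib,
      Finset.sum_add_distrib, ← Finset.sum_div, ← Finset.sum_mul, hsum, one_mul]
  rw [hL, hR] at key
  have h2 := mul_le_mul_of_nonneg_left key hμ.le
  have h3 : μ * (∑ I, q I * Real.log (q I) + (∑ I, q I * s I) / μ + Real.log Z)
      = μ * ∑ I, q I * Real.log (q I) + ∑ I, q I * s I + μ * Real.log Z := by
    field_simp
  rw [mul_zero, h3] at h2
  have h4 : ∑ I, (q I * Real.log (q I) - q I) = ∑ I, q I * Real.log (q I) - 1 := by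
    rw [Finset.sum_sub_distrib, hsum]
  rw [h4]
  nlinarith [h2]

private lemma qside_eq {μ : ℝ} (hμ : 0 < μ) {ι : Type*} [Fintype ι] [Nonempty ι]
    (s : ι → ℝ) :
    ∑ I, (Real.exp (-(s I / μ)) / (∑ J, Real.exp (-(s J / μ)))) * s I +
      μ * ∑ I, ((Real.exp (-(s I / μ)) / (∑ J, Real.exp (-(s J / μ)))) *
          Real.log (Real.exp (-(s I / μ)) / (∑ J, Real.exp (-(s J / μ)))) -
        (Real.exp (-(s I / μ)) / (∑ J, Real.exp (-(s J / μ))))) =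
      -(μ * Real.log (∑ I, Real.exp (-(s I / μ)))) - μ := by
  set Z : ℝ := ∑ J, Real.exp (-(s J / μ)) with hZdef
  have hZ : 0 < Z := Finset.sum_pos (fun I _ => Real.exp_pos _) Finset.univ_nonempty
  have hqsum : ∑ I, Real.exp (-(s I / μ)) / Z = 1 := by
    rw [← Finset.sum_div, ← hZdef, div_self hZ.ne']
  have hterm : ∀ I : ι,
      (Real.exp (-(s I / μ)) / Z) * Real.log (Real.exp (-(s I / μ)) / Z) -
        Real.exp (-(s I / μ)) / Z =
      -(Real.exp (-(s I / μ)) / Z) * s I / μ - (Real.exp (-(s I / μ)) / Z) * Real.log Z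
        - Real.exp (-(s I / μ)) / Z := by
    intro I
    rw [Real.log_div (Real.exp_pos _).ne' hZ.ne', Real.log_exp]
    ring
  rw [Finset.sum_congr rfl (fun I _ => hterm I)]
  rw [Finset.sum_sub_distrib, Finset.sum_sub_distrib, hqsum, ← Finset.sum_mul,
    hqsum, one_mul]
  have : ∑ I, -(Real.exp (-(s I / μ)) / Z) * s I / μ
      = -(∑ I, (Real.exp (-(s I / μ)) / Z) * s I) / μ := by
    rw [← Finset.sum_div, ← Finset.sum_neg_distrib]
    congr 1
    exact Finset.sum_congr rfl (fun I _ => by ring)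
  rw [this]
  field_simp
  ring

private lemma Zprod (μ : ℝ) (m : ℕ) (z : Fin m → ℝ) :
    ∑ I : Finset (Fin m), Real.exp (-((∑ i ∈ I, z i) / μ)) =
      ∏ i, (1 + Real.exp (-(z i / μ))) := by
  have h1 : ∀ I : Finset (Fin m), Real.exp (-((∑ i ∈ I, z i) / μ)) =
      ∏ i ∈ I, Real.exp (-(z i / μ)) := by
    intro I
    rw [← Real.exp_sum]
    congr 1
    rw [Finset.sum_neg_distrib, ← Finset.sum_div]
  rw [Finset.sum_congr rfl (fun I _ => h1 I)]
  have h2 : ∀ i : Fin m, (1 : ℝ) + Real.exp (-(z i / μ)) = Real.exp (-(z i / μ)) + 1 := by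
    intro i; ring
  rw [Finset.prod_congr rfl (fun i _ => h2 i), Finset.prod_add]
  rw [Finset.powerset_univ]
  exact Finset.sum_congr rfl (fun I _ => by simp)

/-- Lemma 3: the generator `φ_r(z) = z log z − z` is proportionate (with
`μ_e = μ_r = μ`) to its symmetrisation
`φ_e(z) = z log z + (1−z) log(1−z) − 1`: there is a constant `b`, not
depending on `z`, relating the two optimal game values. -/
theorem stmt4 (m : ℕ) (hm : 1 ≤ m) (μ : ℝ) (hμ : 0 < μ) :
    ∃ b : ℝ, ∀ z : Fin m → ℝ,
      (⨅ p : {p : Fin m → ℝ // ∀ i, 0 < p i ∧ p i < 1},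
        (∑ i, p.1 i * z i +
          μ * ∑ i, (p.1 i * Real.log (p.1 i) +
            (1 - p.1 i) * Real.log (1 - p.1 i) - 1))) =
      b + ⨅ q : {q : Finset (Fin m) → ℝ //
          (∀ I, 0 < q I) ∧ ∑ I : Finset (Fin m), q I = 1},
        (∑ I : Finset (Fin m), q.1 I * ∑ i ∈ I, z i +
          μ * ∑ I : Finset (Fin m), (q.1 I * Real.log (q.1 I) - q.1 I)) := by
  refine ⟨μ - μ * m, fun z => ?_⟩
  -- closed forms
  set Z : ℝ := ∑ I : Finset (Fin m), Real.exp (-((∑ i ∈ I, z i) / μ)) with hZdef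
  have hZ : 0 < Z := Finset.sum_pos (fun I _ => Real.exp_pos _) Finset.univ_nonempty
  -- ===== p side =====
  set pstar : Fin m → ℝ := fun i => Real.exp (-(z i / μ)) / (1 + Real.exp (-(z i / μ)))
    with hpstardef
  have hpstar : ∀ i, 0 < pstar i ∧ pstar i < 1 := by
    intro i
    have he : (0:ℝ) < Real.exp (-(z i / μ)) := Real.exp_pos _
    have hd : (0:ℝ) < 1 + Real.exp (-(z i / μ)) := by linarith
    exact ⟨div_pos he hd, (div_lt_one hd).2 (by linarith)⟩
  haveI : Nonempty {p : Fin m → ℝ // ∀ i, 0 < p i ∧ p i < 1} := ⟨⟨pstar, hpstar⟩⟩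
  have rewr : ∀ p : Fin m → ℝ,
      (∑ i, p i * z i + μ * ∑ i, (p i * Real.log (p i) +
        (1 - p i) * Real.log (1 - p i) - 1)) =
      ∑ i, (p i * z i + μ * (p i * Real.log (p i) + (1 - p i) * Real.log (1 - p i)))
        - μ * m := by
    intro p
    have h1 : ∑ i, (p i * Real.log (p i) + (1 - p i) * Real.log (1 - p i) - 1)
        = ∑ i, (p i * Real.log (p i) + (1 - p i) * Real.log (1 - p i)) - m := by
      rw [Finset.sum_sub_distrib]; simp
    have h2 : ∑ i, (p i * z i + μ * (p i * Real.log (p i) + (1 - p i) * Real.log (1 - p i)))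
        = ∑ i, p i * z i + μ * ∑ i, (p i * Real.log (p i) + (1 - p i) * Real.log (1 - p i)) := by
      rw [Finset.sum_add_distrib, ← Finset.mul_sum]
    rw [h1, h2]
    ring
  have plow : ∀ p : {p : Fin m → ℝ // ∀ i, 0 < p i ∧ p i < 1},
      ∑ i, -(μ * Real.log (1 + Real.exp (-(z i / μ)))) - μ * m ≤
      ∑ i, p.1 i * z i + μ * ∑ i, (p.1 i * Real.log (p.1 i) +
        (1 - p.1 i) * Real.log (1 - p.1 i) - 1) := by
    intro p
    rw [rewr p.1]
    have := Finset.sum_le_sum (fun i (_ : i ∈ Finset.univ) =>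
      onedim_le hμ (z i) (p.1 i) (p.2 i).1 (p.2 i).2)
    linarith
  have pval : ∑ i, pstar i * z i + μ * ∑ i, (pstar i * Real.log (pstar i) +
      (1 - pstar i) * Real.log (1 - pstar i) - 1) =
      ∑ i, -(μ * Real.log (1 + Real.exp (-(z i / μ)))) - μ * m := by
    rw [rewr pstar]
    congr 1
    exact Finset.sum_congr rfl (fun i _ => onedim_eq hμ (z i))
  have ppart : (⨅ p : {p : Fin m → ℝ // ∀ i, 0 < p i ∧ p i < 1},
      (∑ i, p.1 i * z i + μ * ∑ i, (p.1 i * Real.log (p.1 i) +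
        (1 - p.1 i) * Real.log (1 - p.1 i) - 1))) =
      ∑ i, -(μ * Real.log (1 + Real.exp (-(z i / μ)))) - μ * m := by
    refine le_antisymm ?_ (le_ciInf plow)
    refine ciInf_le_of_le ?_ ⟨pstar, hpstar⟩ (le_of_eq pval)
    exact ⟨_, by rintro x ⟨p, rfl⟩; exact plow p⟩
  -- ===== q side =====
  set qstar : Finset (Fin m) → ℝ :=
    fun I => Real.exp (-((∑ i ∈ I, z i) / μ)) / Z with hqstardef
  have hqstarpos : ∀ I, 0 < qstar I := fun I => div_pos (Real.exp_pos _) hZ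
  have hqstarsum : ∑ I : Finset (Fin m), qstar I = 1 := by
    rw [hqstardef, ← Finset.sum_div, ← hZdef, div_self hZ.ne']
  haveI : Nonempty {q : Finset (Fin m) → ℝ //
      (∀ I, 0 < q I) ∧ ∑ I : Finset (Fin m), q I = 1} :=
    ⟨⟨qstar, hqstarpos, hqstarsum⟩⟩
  have qlow : ∀ q : {q : Finset (Fin m) → ℝ //
      (∀ I, 0 < q I) ∧ ∑ I : Finset (Fin m), q I = 1},
      -(μ * Real.log Z) - μ ≤
      ∑ I : Finset (Fin m), q.1 I * ∑ i ∈ I, z i +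
        μ * ∑ I : Finset (Fin m), (q.1 I * Real.log (q.1 I) - q.1 I) := by
    intro q
    exact qside_le hμ (fun I => ∑ i ∈ I, z i) q.1 q.2.1 q.2.2
  have qval : ∑ I : Finset (Fin m), qstar I * ∑ i ∈ I, z i +
      μ * ∑ I : Finset (Fin m), (qstar I * Real.log (qstar I) - qstar I) =
      -(μ * Real.log Z) - μ := by
    exact qside_eq hμ (fun I => ∑ i ∈ I, z i)
  have qpart : (⨅ q : {q : Finset (Fin m) → ℝ //
      (∀ I, 0 < q I) ∧ ∑ I : Finset (Fin m), q I = 1},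
      (∑ I : Finset (Fin m), q.1 I * ∑ i ∈ I, z i +
        μ * ∑ I : Finset (Fin m), (q.1 I * Real.log (q.1 I) - q.1 I))) =
      -(μ * Real.log Z) - μ := by
    refine le_antisymm ?_ (le_ciInf qlow)
    refine ciInf_le_of_le ?_ ⟨qstar, hqstarpos, hqstarsum⟩ (le_of_eq qval)
    exact ⟨_, by rintro x ⟨q, rfl⟩; exact qlow q⟩
  rw [ppart, qpart]
  -- ===== final arithmetic =====
  have hlog : Real.log Z = ∑ i, Real.log (1 + Real.exp (-(z i / μ))) := by
    rw [hZdef, Zprod μ m z]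
    refine Real.log_prod (fun i _ => ?_)
    have : (0:ℝ) < 1 + Real.exp (-(z i / μ)) := by positivity
    exact this.ne'
  have hsum : ∑ i, -(μ * Real.log (1 + Real.exp (-(z i / μ))))
      = -(μ * Real.log Z) := by
    rw [hlog, Finset.mul_sum, Finset.sum_neg_distrib]
  rw [hsum]
  ring
end

section
/- Fix μ > 0 and an integer m ≥ 1. For all z ∈ ℝ^m: (i) inf over p ∈ (0,1)^m of [ Σ_{i∈[m]} p_i z_i + μ Σ_{i∈[m]} ( p_i log p_i + (1−p_i) log(1−p_i) − 1 ) ] = −μ m − μ Σ_{i∈[m]} log( 1 + exp(−z_i/μ) ); and (ii) inf over q with q_I > 0 for all I ⊆ [m] and Σ_{I⊆[m]} q_I = 1 of [ Σ_{I⊆[m]} q_I Σ_{i∈I} z_i + μ Σ_{I⊆[m]} ( q_I log q_I − q_I ) ] = −μ − μ log( Σ_{I⊆[m]} exp( −(1/μ) Σ_{i∈I} z_i ) ). Consequently the logistic example loss Σ_{i∈[m]} log(1 + exp(−z_i/μ)) and the exponential rado loss Σ_{I⊆[m]} exp(−(1/μ) Σ_{i∈I} z_i) are equivalent: the negatives of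 the two optimal values above are strictly increasing functions of these two losses respectively. -/
/-- `L_e`-optimal value for the generator `φ_e(z) = z log z + (1−z) log(1−z) − 1`. -/
noncomputable def infE (m : ℕ) (μ : ℝ) (z : Fin m → ℝ) : ℝ :=
  ⨅ p : {p : Fin m → ℝ // ∀ i, 0 < p i ∧ p i < 1},
    (∑ i, p.1 i * z i +
      μ * ∑ i, (p.1 i * Real.log (p.1 i) + (1 - p.1 i) * Real.log (1 - p.1 i) - 1))

/-- `L_r`-optimal value for the generator `φ_r(z) = z log z − z`. -/
noncomputable def infR (m : ℕ) (μ : ℝ) (z : Fin m → ℝ) : ℝ :=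
  ⨅ q : {q : Finset (Fin m) → ℝ // (∀ I, 0 < q I) ∧ ∑ I : Finset (Fin m), q I = 1},
    (∑ I : Finset (Fin m), q.1 I * ∑ i ∈ I, z i +
      μ * ∑ I : Finset (Fin m), (q.1 I * Real.log (q.1 I) - q.1 I))

/-- The logistic example loss `Σ_{i∈[m]} log(1 + exp(−z_i/μ))`. -/
noncomputable def logisticLoss (m : ℕ) (μ : ℝ) (z : Fin m → ℝ) : ℝ :=
  ∑ i, Real.log (1 + Real.exp (-z i / μ))

/-- The exponential rado loss `Σ_{I⊆[m]} exp(−(1/μ) Σ_{i∈I} z_i)`. -/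
noncomputable def expRadoLoss (m : ℕ) (μ : ℝ) (z : Fin m → ℝ) : ℝ :=
  ∑ I : Finset (Fin m), Real.exp (-(1 / μ) * ∑ i ∈ I, z i)

lemma klterm (a b : ℝ) (ha : 0 < a) (hb : 0 < b) :
    a - b ≤ a * (Real.log a - Real.log b) := by
  have h := Real.log_le_sub_one_of_pos (show (0:ℝ) < b / a from div_pos hb ha)
  rw [Real.log_div hb.ne' ha.ne'] at h
  have h2 : a * (b / a - 1) = b - a := by field_simp
  nlinarith [mul_le_mul_of_nonneg_left h ha.le]

lemma E_pointwise (μ z p : ℝ) (hμ : 0 < μ) (h0 : 0 < p) (h1 : p < 1) :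
    -μ - μ * Real.log (1 + Real.exp (-z / μ)) ≤
      p * z + μ * (p * Real.log p + (1 - p) * Real.log (1 - p) - 1) := by
  set t := Real.exp (-z / μ) with ht
  have htpos : 0 < t := Real.exp_pos _
  have hs : 0 < 1 + t := by linarith
  have hps : 0 < t / (1 + t) := div_pos htpos hs
  have hps1 : t / (1 + t) < 1 := (div_lt_one hs).2 (by linarith)
  have h1m : (1 : ℝ) - t / (1 + t) = 1 / (1 + t) := by field_simp; ring
  have hlogp : Real.log (t / (1 + t)) = -z / μ - Real.log (1 + t) := by
    rw [Real.log_div htpos.ne' hs.ne', ht, Real.log_exp]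
  have hlog1m : Real.log (1 - t / (1 + t)) = -Real.log (1 + t) := by
    rw [h1m, Real.log_div one_ne_zero hs.ne', Real.log_one]; ring
  have k1 := klterm p (t / (1 + t)) h0 hps
  have k2 := klterm (1 - p) (1 - t / (1 + t)) (by linarith) (by linarith)
  rw [hlogp] at k1
  rw [hlog1m] at k2
  have hz : p * (-z / μ) * μ = -(p * z) := by field_simp
  nlinarith [k1, k2, hμ, mul_le_mul_of_nonneg_left k1 hμ.le, mul_le_mul_of_nonneg_left k2 hμ.le]

lemma E_eq (μ z : ℝ) (hμ : 0 < μ) :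
    (Real.exp (-z / μ) / (1 + Real.exp (-z / μ))) * z +
      μ * ((Real.exp (-z / μ) / (1 + Real.exp (-z / μ))) *
            Real.log (Real.exp (-z / μ) / (1 + Real.exp (-z / μ))) +
          (1 - Real.exp (-z / μ) / (1 + Real.exp (-z / μ))) *
            Real.log (1 - Real.exp (-z / μ) / (1 + Real.exp (-z / μ))) - 1) =
      -μ - μ * Real.log (1 + Real.exp (-z / μ)) := by
  set t := Real.exp (-z / μ) with ht
  have htpos : 0 < t := Real.exp_pos _
  have hs : 0 < 1 + t := by linarith
  have h1m : (1 : ℝ) - t / (1 + t) = 1 / (1 + t) := by field_simp; ring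
  have hlogp : Real.log (t / (1 + t)) = -z / μ - Real.log (1 + t) := by
    rw [Real.log_div htpos.ne' hs.ne', ht, Real.log_exp]
  have hlog1m : Real.log (1 - t / (1 + t)) = -Real.log (1 + t) := by
    rw [h1m, Real.log_div one_ne_zero hs.ne', Real.log_one]; ring
  rw [hlogp, hlog1m]
  field_simp
  ring

lemma infE_eq (m : ℕ) (μ : ℝ) (hμ : 0 < μ) (z : Fin m → ℝ) :
    infE m μ z = -μ * m - μ * ∑ i, Real.log (1 + Real.exp (-z i / μ)) := by
  classical
  set F : {p : Fin m → ℝ // ∀ i, 0 < p i ∧ p i < 1} → ℝ := fun p =>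
    (∑ i, p.1 i * z i +
      μ * ∑ i, (p.1 i * Real.log (p.1 i) + (1 - p.1 i) * Real.log (1 - p.1 i) - 1)) with hF
  have hval : ∀ p : {p : Fin m → ℝ // ∀ i, 0 < p i ∧ p i < 1},
      F p = ∑ i, (p.1 i * z i +
        μ * (p.1 i * Real.log (p.1 i) + (1 - p.1 i) * Real.log (1 - p.1 i) - 1)) := by
    intro p
    simp only [hF, Finset.sum_add_distrib, Finset.mul_sum]
  have hbound : ∀ p : {p : Fin m → ℝ // ∀ i, 0 < p i ∧ p i < 1},
      -μ * m - μ * ∑ i, Real.log (1 + Real.exp (-z i / μ)) ≤ F p := by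
    intro p
    rw [hval]
    have : -μ * m - μ * ∑ i, Real.log (1 + Real.exp (-z i / μ))
        = ∑ i : Fin m, (-μ - μ * Real.log (1 + Real.exp (-z i / μ))) := by
      simp [Finset.sum_sub_distrib, Finset.mul_sum]
      ring
    rw [this]
    exact Finset.sum_le_sum fun i _ =>
      E_pointwise μ (z i) (p.1 i) hμ (p.2 i).1 (p.2 i).2
  have hpstar : ∀ i, 0 < Real.exp (-z i / μ) / (1 + Real.exp (-z i / μ)) ∧
      Real.exp (-z i / μ) / (1 + Real.exp (-z i / μ)) < 1 := by
    intro i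
    have h1 : 0 < Real.exp (-z i / μ) := Real.exp_pos _
    have h2 : (0:ℝ) < 1 + Real.exp (-z i / μ) := by linarith
    exact ⟨div_pos h1 h2, (div_lt_one h2).2 (by linarith)⟩
  set pstar : {p : Fin m → ℝ // ∀ i, 0 < p i ∧ p i < 1} :=
    ⟨fun i => Real.exp (-z i / μ) / (1 + Real.exp (-z i / μ)), hpstar⟩ with hps
  have hattain : F pstar = -μ * m - μ * ∑ i, Real.log (1 + Real.exp (-z i / μ)) := by
    rw [hval]
    have : ∀ i ∈ Finset.univ, (pstar.1 i * z i +
        μ * (pstar.1 i * Real.log (pstar.1 i) +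
          (1 - pstar.1 i) * Real.log (1 - pstar.1 i) - 1))
        = -μ - μ * Real.log (1 + Real.exp (-z i / μ)) := fun i _ => E_eq μ (z i) hμ
    rw [Finset.sum_congr rfl this]
    simp [Finset.sum_sub_distrib, Finset.mul_sum]
    ring
  have : Nonempty {p : Fin m → ℝ // ∀ i, 0 < p i ∧ p i < 1} := ⟨pstar⟩
  refine le_antisymm ?_ (le_ciInf hbound)
  calc infE m μ z ≤ F pstar := ciInf_le ⟨_, fun x hx => by
        obtain ⟨p, rfl⟩ := hx; exact hbound p⟩ pstar
    _ = _ := hattain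

lemma infR_eq (m : ℕ) (μ : ℝ) (hμ : 0 < μ) (z : Fin m → ℝ) :
    infR m μ z = -μ - μ * Real.log
        (∑ I : Finset (Fin m), Real.exp (-(1 / μ) * ∑ i ∈ I, z i)) := by
  classical
  set a : Finset (Fin m) → ℝ := fun I => ∑ i ∈ I, z i with ha
  set Z : ℝ := ∑ I : Finset (Fin m), Real.exp (-(1 / μ) * a I) with hZ
  have hZpos : 0 < Z :=
    Finset.sum_pos (fun I _ => Real.exp_pos _) ⟨∅, Finset.mem_univ _⟩
  have hqstar : ∀ I : Finset (Fin m), 0 < Real.exp (-(1 / μ) * a I) / Z :=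
    fun I => div_pos (Real.exp_pos _) hZpos
  have hqsum : ∑ I : Finset (Fin m), Real.exp (-(1 / μ) * a I) / Z = 1 := by
    rw [← Finset.sum_div, ← hZ, div_self hZpos.ne']
  set qstar : {q : Finset (Fin m) → ℝ // (∀ I, 0 < q I) ∧ ∑ I : Finset (Fin m), q I = 1} :=
    ⟨fun I => Real.exp (-(1 / μ) * a I) / Z, hqstar, hqsum⟩ with hqs
  have hlogq : ∀ I, Real.log (Real.exp (-(1 / μ) * a I) / Z)
      = -(1 / μ) * a I - Real.log Z := by
    intro I
    rw [Real.log_div (Real.exp_pos _).ne' hZpos.ne', Real.log_exp]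
  set F : {q : Finset (Fin m) → ℝ // (∀ I, 0 < q I) ∧ ∑ I : Finset (Fin m), q I = 1} → ℝ :=
    fun q => (∑ I : Finset (Fin m), q.1 I * a I +
      μ * ∑ I : Finset (Fin m), (q.1 I * Real.log (q.1 I) - q.1 I)) with hF
  have hbound : ∀ q, -μ - μ * Real.log Z ≤ F q := by
    intro q
    -- termwise: q I - qstar I ≤ q I * (log q I - log qstar I)
    have key : ∀ I ∈ Finset.univ, (q.1 I - Real.exp (-(1 / μ) * a I) / Z)
        ≤ q.1 I * Real.log (q.1 I) - q.1 I * (-(1 / μ) * a I - Real.log Z) := by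
      intro I _
      have := klterm (q.1 I) (Real.exp (-(1 / μ) * a I) / Z) (q.2.1 I) (hqstar I)
      rw [hlogq I] at this
      nlinarith [this]
    have hsum := Finset.sum_le_sum key
    rw [Finset.sum_sub_distrib, Finset.sum_sub_distrib, q.2.2, hqsum] at hsum
    -- hsum : 1 - 1 ≤ Σ q log q - Σ q I * (-(1/μ) a I - log Z)
    have hexp : ∑ I : Finset (Fin m), q.1 I * (-(1 / μ) * a I - Real.log Z)
        = -(1 / μ) * ∑ I : Finset (Fin m), q.1 I * a I - Real.log Z := by
      rw [Finset.sum_congr rfl (fun I _ => by ring :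
        ∀ I ∈ Finset.univ, q.1 I * (-(1 / μ) * a I - Real.log Z)
          = -(1 / μ) * (q.1 I * a I) - Real.log Z * q.1 I)]
      rw [Finset.sum_sub_distrib, ← Finset.mul_sum, ← Finset.mul_sum, q.2.2]
      ring
    rw [hexp] at hsum
    -- hsum : 0 ≤ Σ q log q + (1/μ) Σ q a + log Z
    have hmul := mul_le_mul_of_nonneg_left hsum hμ.le
    have hqlogsub : ∑ I : Finset (Fin m), (q.1 I * Real.log (q.1 I) - q.1 I)
        = ∑ I : Finset (Fin m), q.1 I * Real.log (q.1 I) - 1 := by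
      rw [Finset.sum_sub_distrib, q.2.2]
    rw [hF]
    simp only [hqlogsub]
    have h2 : μ * (-(1 / μ) * ∑ I : Finset (Fin m), q.1 I * a I - Real.log Z)
        = -(∑ I : Finset (Fin m), q.1 I * a I) - μ * Real.log Z := by
      field_simp
    rw [mul_sub, mul_sub, h2] at hmul
    rw [mul_sub]
    linarith [hmul]
  have hattain : F qstar = -μ - μ * Real.log Z := by
    show ∑ I : Finset (Fin m), qstar.1 I * a I +
      μ * ∑ I : Finset (Fin m), (qstar.1 I * Real.log (qstar.1 I) - qstar.1 I)
      = -μ - μ * Real.log Z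
    have h1 : ∑ I : Finset (Fin m), (qstar.1 I * Real.log (qstar.1 I) - qstar.1 I)
        = ∑ I : Finset (Fin m), qstar.1 I * Real.log (qstar.1 I) - 1 := by
      rw [Finset.sum_sub_distrib, qstar.2.2]
    have h2 : ∀ I ∈ Finset.univ, qstar.1 I * Real.log (qstar.1 I)
        = -(1/μ) * (qstar.1 I * a I) - Real.log Z * qstar.1 I := by
      intro I _
      show (Real.exp (-(1 / μ) * a I) / Z) * Real.log (Real.exp (-(1 / μ) * a I) / Z) = _
      rw [hlogq I]; ring
    rw [h1, Finset.sum_congr rfl h2, Finset.sum_sub_distrib, ← Finset.mul_sum,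
      ← Finset.mul_sum, qstar.2.2]
    rw [mul_sub, mul_sub, ← mul_assoc]
    have : μ * -(1 / μ) = -1 := by field_simp
    rw [this]
    ring
  have : Nonempty {q : Finset (Fin m) → ℝ // (∀ I, 0 < q I) ∧
      ∑ I : Finset (Fin m), q I = 1} := ⟨qstar⟩
  refine le_antisymm ?_ (le_ciInf hbound)
  calc infR m μ z ≤ F qstar := ciInf_le ⟨_, fun x hx => by
        obtain ⟨q, rfl⟩ := hx; exact hbound q⟩ qstar
    _ = _ := hattain



/-- Corollary 1: closed forms of the two optimal game values, implying the
equivalence of the logistic example loss and the exponential rado loss. -/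
theorem stmt5 (m : ℕ) (hm : 1 ≤ m) (μ : ℝ) (hμ : 0 < μ) :
    (∀ z : Fin m → ℝ,
      infE m μ z = -μ * m - μ * ∑ i, Real.log (1 + Real.exp (-z i / μ))) ∧
    (∀ z : Fin m → ℝ,
      infR m μ z = -μ - μ * Real.log
        (∑ I : Finset (Fin m), Real.exp (-(1 / μ) * ∑ i ∈ I, z i))) ∧
    (∃ fe fr : ℝ → ℝ, StrictMono fe ∧ StrictMono fr ∧
      ∀ z : Fin m → ℝ,
        -infE m μ z = fe (logisticLoss m μ z) ∧
        -infR m μ z = fr (expRadoLoss m μ z)) := by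
  refine ⟨fun z => infE_eq m μ hμ z, fun z => infR_eq m μ hμ z, ?_⟩
  refine ⟨fun x => μ * m + μ * x,
    fun x => μ + μ * (if x < 1 then x - 1 else Real.log x), ?_, ?_, ?_⟩
  · intro x y hxy
    show μ * m + μ * x < μ * m + μ * y
    have := mul_lt_mul_of_pos_left hxy hμ
    linarith
  · intro x y hxy
    have hg : (if x < 1 then x - 1 else Real.log x) <
        (if y < 1 then y - 1 else Real.log y) := by
      by_cases hx : x < 1 <;> by_cases hy : y < 1 <;> simp [hx, hy]
      · linarith
      · have : Real.log y ≥ 0 := Real.log_nonneg (by linarith)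
        linarith
      · linarith
      · exact Real.log_lt_log (by linarith) hxy
    show μ + μ * (if x < 1 then x - 1 else Real.log x) <
      μ + μ * (if y < 1 then y - 1 else Real.log y)
    have := mul_lt_mul_of_pos_left hg hμ
    linarith
  · intro z
    constructor
    · rw [infE_eq m μ hμ z, logisticLoss]; ring
    · rw [infR_eq m μ hμ z, expRadoLoss]
      have h1 : (1:ℝ) ≤ ∑ I : Finset (Fin m), Real.exp (-(1 / μ) * ∑ i ∈ I, z i) := by
        have := Finset.single_le_sum
          (f := fun I : Finset (Fin m) => Real.exp (-(1 / μ) * ∑ i ∈ I, z i))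
          (fun I _ => (Real.exp_pos _).le) (Finset.mem_univ (∅ : Finset (Fin m)))
        simpa using this
      show _ = μ + μ * (if (∑ I : Finset (Fin m), Real.exp (-(1 / μ) * ∑ i ∈ I, z i)) < 1
        then (∑ I : Finset (Fin m), Real.exp (-(1 / μ) * ∑ i ∈ I, z i)) - 1
        else Real.log (∑ I : Finset (Fin m), Real.exp (-(1 / μ) * ∑ i ∈ I, z i)))
      rw [if_neg (by linarith)]
      ring
end

section
/- Fix μ_r > 0 and an integer m ≥ 1, and set μ_e = μ_r / 2^{m−1}. Then there exists b ∈ ℝ, not depending on z, such that for all z ∈ ℝ^m: inf over p ∈ ℝ^m of [ Σ_{i∈[m]} p_i z_i + μ_e Σ_{i∈[m]} (1/2)(1 − 2 p_i (1 − p_i)) ] equals b plus inf over q ∈ ℝ^{2^m} with Σ_{I⊆[m]} q_I = 1 of [ Σ_{I⊆[m]} q_I Σ_{i∈I} z_i + μ_r Σ_{I⊆[m]} (1/2) q_I² ]. In other words, the generator φ_r(z) = z²/2 is proportionate (with μ_e = μ_r/2^{m−1}) to its symmetrisation φ_e(z) = (1/2)(1 − 2z(1 − z)). -/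
lemma aux_sum1 {m : ℕ} (z : Fin m → ℝ) (s : Finset (Fin m)) :
    ∑ I ∈ s.powerset, ∑ i ∈ I, z i = 2 ^ s.card / 2 * ∑ i ∈ s, z i := by
  induction s using Finset.induction with
  | empty => simp
  | @insert a s ha ih =>
    rw [Finset.sum_powerset_insert ha, Finset.sum_insert ha, Finset.card_insert_of_notMem ha]
    have h : ∀ I ∈ s.powerset, ∑ i ∈ insert a I, z i = z a + ∑ i ∈ I, z i := by
      intro I hI
      rw [Finset.sum_insert (fun h => ha ((Finset.mem_powerset.1 hI) h))]
    rw [Finset.sum_congr rfl h, Finset.sum_add_distrib, Finset.sum_const, ih,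
      Finset.card_powerset]
    ring

lemma aux_sum2 {m : ℕ} (z : Fin m → ℝ) (s : Finset (Fin m)) :
    ∑ I ∈ s.powerset, (∑ i ∈ I, z i) ^ 2
      = 2 ^ s.card / 4 * (∑ i ∈ s, z i ^ 2 + (∑ i ∈ s, z i) ^ 2) := by
  induction s using Finset.induction with
  | empty => simp
  | @insert a s ha ih =>
    rw [Finset.sum_powerset_insert ha, Finset.sum_insert ha, Finset.sum_insert ha,
      Finset.card_insert_of_notMem ha]
    have h : ∀ I ∈ s.powerset, (∑ i ∈ insert a I, z i) ^ 2
        = z a ^ 2 + 2 * z a * (∑ i ∈ I, z i) + (∑ i ∈ I, z i) ^ 2 := by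
      intro I hI
      rw [Finset.sum_insert (fun h => ha ((Finset.mem_powerset.1 hI) h))]
      ring
    rw [Finset.sum_congr rfl h, Finset.sum_add_distrib, Finset.sum_add_distrib,
      Finset.sum_const, ih, ← Finset.mul_sum, aux_sum1, Finset.card_powerset]
    ring

/-- Lemma 4: the generator `φ_r(z) = z²/2` is proportionate, with
`μ_e = μ_r / 2^{m−1}`, to its symmetrisation `φ_e(z) = (1/2)(1 − 2z(1−z))`:
there is a constant `b`, not depending on `z`, relating the two optimal game
values. -/
theorem stmt7 (m : ℕ) (hm : 1 ≤ m) (μr : ℝ) (hμr : 0 < μr) :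
    ∃ b : ℝ, ∀ z : Fin m → ℝ,
      (⨅ p : Fin m → ℝ,
        (∑ i, p i * z i +
          (μr / 2 ^ (m - 1)) * ∑ i, (1 / 2 : ℝ) * (1 - 2 * p i * (1 - p i)))) =
      b + ⨅ q : {q : Finset (Fin m) → ℝ // ∑ I : Finset (Fin m), q I = 1},
        (∑ I : Finset (Fin m), q.1 I * ∑ i ∈ I, z i +
          μr * ∑ I : Finset (Fin m), (1 / 2 : ℝ) * q.1 I ^ 2) := by
  have h2 : (0:ℝ) < 2 ^ (m-1) := by positivity
  set μe : ℝ := μr / 2 ^ (m-1) with hμedef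
  have hμe : 0 < μe := div_pos hμr h2
  have hpow : (2:ℝ) ^ (m-1) * 2 = 2 ^ m := by
    rw [← pow_succ]; congr 1; omega
  refine ⟨((m:ℝ) - 1) * μr / 2 ^ (m+1), fun z => ?_⟩
  set Z := ∑ i, z i with hZ
  set W := ∑ i, z i ^ 2 with hW
  set c : ℝ := 2 ^ m with hc
  have hcpos : (0:ℝ) < c := by positivity
  have hcard : ((Finset.univ : Finset (Finset (Fin m))).card : ℝ) = c := by
    rw [Finset.card_univ, Fintype.card_finset, Fintype.card_fin]
    push_cast
    rfl
  have hS1 : ∑ I : Finset (Fin m), ∑ i ∈ I, z i = c / 2 * Z := by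
    rw [← Finset.powerset_univ, aux_sum1]
    simp [hc, hZ, Finset.card_univ]
  have hS2 : ∑ I : Finset (Fin m), (∑ i ∈ I, z i) ^ 2 = c / 4 * (W + Z ^ 2) := by
    rw [← Finset.powerset_univ, aux_sum2]
    simp [hc, hW, hZ, Finset.card_univ]
  set lam : ℝ := (μr + c / 2 * Z) / c with hlam
  set qstar : Finset (Fin m) → ℝ := fun I => (lam - ∑ i ∈ I, z i) / μr with hqstar
  have hqsum : ∑ I : Finset (Fin m), qstar I = 1 := by
    simp only [hqstar]
    rw [← Finset.sum_div, Finset.sum_sub_distrib, Finset.sum_const, hS1,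
      nsmul_eq_mul, hcard, hlam]
    field_simp
    ring
  set pstar : Fin m → ℝ := fun i => (μe - z i) / (2 * μe) with hpstar
  set A : ℝ := ∑ i, (μe/4 + z i/2 - z i^2/(4*μe)) with hA
  set B : ℝ := lam - μr/2 * ∑ I : Finset (Fin m), qstar I ^ 2 with hB
  -- LHS analysis
  have hpt : ∀ p : Fin m → ℝ,
      (∑ i, p i * z i + μe * ∑ i, (1/2 : ℝ) * (1 - 2 * p i * (1 - p i)))
        = A + ∑ i, μe * (p i - pstar i) ^ 2 := by
    intro p
    rw [Finset.mul_sum, ← Finset.sum_add_distrib, hA, ← Finset.sum_add_distrib]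
    refine Finset.sum_congr rfl fun i _ => ?_
    simp only [hpstar]
    field_simp
    ring
  have hlb : ∀ p : Fin m → ℝ,
      A ≤ ∑ i, p i * z i + μe * ∑ i, (1/2:ℝ) * (1 - 2 * p i * (1 - p i)) := by
    intro p
    rw [hpt p]
    have : 0 ≤ ∑ i, μe * (p i - pstar i) ^ 2 :=
      Finset.sum_nonneg fun i _ => by positivity
    linarith
  have hbdd : BddBelow (Set.range fun p : Fin m → ℝ =>
      ∑ i, p i * z i + μe * ∑ i, (1/2:ℝ) * (1 - 2 * p i * (1 - p i))) := by
    refine ⟨A, ?_⟩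
    rintro _ ⟨p, rfl⟩
    exact hlb p
  have hL : (⨅ p : Fin m → ℝ,
      (∑ i, p i * z i + μe * ∑ i, (1/2 : ℝ) * (1 - 2 * p i * (1 - p i)))) = A := by
    apply le_antisymm
    · have h := ciInf_le hbdd pstar
      rw [hpt pstar] at h
      simpa using h
    · exact le_ciInf fun p => hlb p
  -- RHS analysis
  haveI : Nonempty {q : Finset (Fin m) → ℝ // ∑ I : Finset (Fin m), q I = 1} :=
    ⟨⟨qstar, hqsum⟩⟩
  have hqt : ∀ q : {q : Finset (Fin m) → ℝ // ∑ I : Finset (Fin m), q I = 1},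
      (∑ I : Finset (Fin m), q.1 I * ∑ i ∈ I, z i +
        μr * ∑ I : Finset (Fin m), (1/2:ℝ) * q.1 I ^ 2)
        = B + ∑ I : Finset (Fin m), (μr/2) * (q.1 I - qstar I) ^ 2 := by
    rintro ⟨q, hq⟩
    simp only
    have key : ∀ I : Finset (Fin m), q I * (∑ i ∈ I, z i) + μr * ((1/2:ℝ) * q I ^ 2)
        = (μr/2) * (q I - qstar I) ^ 2 + (lam * q I - (μr/2) * qstar I ^ 2) := by
      intro I
      have hs : (∑ i ∈ I, z i) = lam - μr * qstar I := by
        simp only [hqstar]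
        field_simp
        ring
      rw [hs]; ring
    rw [Finset.mul_sum, ← Finset.sum_add_distrib,
      Finset.sum_congr rfl fun I _ => key I, Finset.sum_add_distrib,
      Finset.sum_sub_distrib]
    simp only [← Finset.mul_sum]
    rw [hq, hB]
    ring
  have hR : (⨅ q : {q : Finset (Fin m) → ℝ // ∑ I : Finset (Fin m), q I = 1},
      (∑ I : Finset (Fin m), q.1 I * ∑ i ∈ I, z i +
        μr * ∑ I : Finset (Fin m), (1/2:ℝ) * q.1 I ^ 2)) = B := by
    have hlb' : ∀ q : {q : Finset (Fin m) → ℝ // ∑ I : Finset (Fin m), q I = 1},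
        B ≤ ∑ I : Finset (Fin m), q.1 I * ∑ i ∈ I, z i +
          μr * ∑ I : Finset (Fin m), (1/2:ℝ) * q.1 I ^ 2 := by
      intro q
      rw [hqt q]
      have : 0 ≤ ∑ I : Finset (Fin m), (μr/2) * (q.1 I - qstar I) ^ 2 :=
        Finset.sum_nonneg fun I _ => by positivity
      linarith
    apply le_antisymm
    · have hbdd' : BddBelow (Set.range fun q : {q : Finset (Fin m) → ℝ //
          ∑ I : Finset (Fin m), q I = 1} =>
          ∑ I : Finset (Fin m), q.1 I * ∑ i ∈ I, z i +
            μr * ∑ I : Finset (Fin m), (1/2:ℝ) * q.1 I ^ 2) := by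
        refine ⟨B, ?_⟩
        rintro _ ⟨q, rfl⟩
        exact hlb' q
      have h := ciInf_le hbdd' ⟨qstar, hqsum⟩
      rw [hqt ⟨qstar, hqsum⟩] at h
      simpa using h
    · exact le_ciInf fun q => hlb' q
  rw [hL, hR]
  -- final algebra: A = b + B
  have hAval : A = (m:ℝ) * (μe/4) + Z/2 - W/(4*μe) := by
    rw [hA, Finset.sum_sub_distrib, Finset.sum_add_distrib, Finset.sum_const,
      Finset.card_univ, Fintype.card_fin, nsmul_eq_mul, ← Finset.sum_div,
      ← Finset.sum_div, ← hZ, ← hW]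
  have hQS : ∑ I : Finset (Fin m), qstar I ^ 2
      = (c * lam ^ 2 - 2 * lam * (c/2*Z) + c/4*(W + Z^2)) / μr ^ 2 := by
    simp only [hqstar, div_pow]
    rw [← Finset.sum_div]
    congr 1
    rw [Finset.sum_congr rfl (fun I _ => by ring :
        ∀ I ∈ (Finset.univ : Finset (Finset (Fin m))),
          (lam - ∑ i ∈ I, z i) ^ 2
            = lam ^ 2 - 2 * lam * (∑ i ∈ I, z i) + (∑ i ∈ I, z i) ^ 2),
      Finset.sum_add_distrib, Finset.sum_sub_distrib, Finset.sum_const,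
      nsmul_eq_mul, hcard, ← Finset.mul_sum, hS1, hS2]
  rw [hAval, hB, hQS]
  have hμe2 : μe = 2 * μr / c := by
    rw [hμedef, ← hpow]
    field_simp
  have hp1 : (2:ℝ) ^ (m+1) = 2 * c := by rw [hc, pow_succ]; ring
  rw [hμe2, hp1, hlam]
  have hμr' : μr ≠ 0 := ne_of_gt hμr
  have hc' : c ≠ 0 := ne_of_gt hcpos
  field_simp
  ring
end

section
/- Let m ≥ 1, d ≥ 1, and let (x_i, y_i) ∈ ℝ^d × {−1,1} for i ∈ [m] be examples with edge vectors e_i = y_i · x_i, and rademacher observations π_I = Σ_{i∈I} e_i for I ⊆ [m]. Let φ_e, φ_r : ℝ → ℝ ∪ {+∞} be generators with parameters μ_e, μ_r > 0 that are proportionate for m with constant b, and suppose there exist a_e > 0 and b_e ∈ ℝ and a function ℓ_e : ℝ^m → ℝ such that −L_e*(z) = a_e ℓ_e(z) + b_e for all z ∈ ℝ^m (f_e is linear). Let Ω : ℝ^d → ℝ be any regularizer with Ω(0) = 0, and set Ω̃(θ) = a_e Ω(θ)/‖θ‖₂² for θ ≠ 0 and Ω̃(0) = 0. Then for every θ ∈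 ℝ^d, writing z(θ) ∈ ℝ^m for the vector with coordinates z(θ)_i = θ·e_i: a_e ( ℓ_e(z(θ)) + Ω(θ) ) + b_e = − inf { Σ_{I⊆[m]} q_I θ·( π_I − Ω̃(θ)·θ ) + μ_r Σ_{I⊆[m]} φ_r(q_I) : q ∈ ℝ^{2^m}, Σ_{I⊆[m]} q_I = 1 } − b. That is, the Ω-regularized example loss is equivalent to the rado loss computed over the regularized rados { π_I − Ω̃(θ)·θ : I ⊆ [m] }. -/
/-- `L_e*(z) = inf_{p ∈ ℝ^m} ( Σ_i p_i z_i + μ_e Σ_i φ_e(p_i) )`, with generator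
taking values in `ℝ ∪ {+∞}` (encoded as `EReal`). -/
noncomputable def LeStar (m : ℕ) (φe : ℝ → EReal) (μe : ℝ) (z : Fin m → ℝ) : EReal :=
  ⨅ p : Fin m → ℝ,
    (((∑ i, p i * z i : ℝ) : EReal) + (μe : EReal) * ∑ i, φe (p i))

/-- `L_r*(z) = inf { Σ_I q_I Σ_{i∈I} z_i + μ_r Σ_I φ_r(q_I) : Σ_I q_I = 1 }`. -/
noncomputable def LrStar (m : ℕ) (φr : ℝ → EReal) (μr : ℝ) (z : Fin m → ℝ) : EReal :=
  ⨅ q : {q : Finset (Fin m) → ℝ // ∑ I : Finset (Fin m), q I = 1},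
    (((∑ I : Finset (Fin m), q.1 I * ∑ i ∈ I, z i : ℝ) : EReal) +
      (μr : EReal) * ∑ I : Finset (Fin m), φr (q.1 I))

lemma my_iInf_add_coe {ι : Sort*} [Nonempty ι] (g : ι → EReal) (c : ℝ) :
    (⨅ i, (g i + (c : EReal))) = (⨅ i, g i) + (c : EReal) := by
  apply le_antisymm
  · have h : (⨅ i, (g i + (c : EReal))) - (c : EReal) ≤ ⨅ i, g i := by
      apply le_iInf
      intro i
      exact EReal.sub_le_of_le_add (iInf_le _ i)
    calc (⨅ i, (g i + (c : EReal)))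
        = (⨅ i, (g i + (c : EReal))) - (c : EReal) + (c : EReal) :=
          (EReal.sub_add_cancel).symm
      _ ≤ (⨅ i, g i) + (c : EReal) := add_le_add_left h _
  · exact le_iInf fun i => add_le_add_left (iInf_le _ i) _

/-- Theorem 3: let `e_i = y_i · x_i` be the edge vectors and
`π_I = Σ_{i∈I} e_i` the rademacher observations. If `φ_e, φ_r` (with
`μ_e, μ_r`) are proportionate with constant `b` and `f_e` is linear
(`−L_e*(z) = a_e ℓ_e(z) + b_e` with `a_e > 0`), then for any regularizer `Ω`
with `Ω(0) = 0` and any `θ`, the `Ω`-regularized example loss is equivalent to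
the rado loss computed over the regularized rados `π_I − Ω̃(θ)·θ`, where
`Ω̃(θ) = a_e Ω(θ)/‖θ‖₂²` for `θ ≠ 0` and `Ω̃(0) = 0`. -/
theorem stmt11 (m d : ℕ) (hm : 1 ≤ m) (hd : 1 ≤ d)
    (x : Fin m → Fin d → ℝ) (y : Fin m → ℝ) (hy : ∀ i, y i = 1 ∨ y i = -1)
    (e : Fin m → Fin d → ℝ) (he : ∀ i, e i = y i • x i)
    (π : Finset (Fin m) → Fin d → ℝ) (hπ : ∀ I, π I = ∑ i ∈ I, e i)
    (φe φr : ℝ → EReal) (hφe_ne_bot : ∀ t, φe t ≠ ⊥) (hφr_ne_bot : ∀ t, φr t ≠ ⊥)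
    (μe μr : ℝ) (hμe : 0 < μe) (hμr : 0 < μr) (b : ℝ)
    -- proportionate, with constant `b`
    (hprop : ∀ z : Fin m → ℝ, LeStar m φe μe z = LrStar m φr μr z + (b : EReal))
    -- `f_e` is linear: `−L_e*(z) = a_e·ℓ_e(z) + b_e`
    (ae be : ℝ) (hae : 0 < ae) (ℓe : (Fin m → ℝ) → ℝ)
    (hlin : ∀ z : Fin m → ℝ, -LeStar m φe μe z = ((ae * ℓe z + be : ℝ) : EReal))
    -- the regularizer and the rescaled regularizer `Ω̃`
    (Ω : (Fin d → ℝ) → ℝ) (hΩ0 : Ω 0 = 0)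
    (Ωt : (Fin d → ℝ) → ℝ)
    (hΩt : ∀ θ : Fin d → ℝ, θ ≠ 0 → Ωt θ = ae * Ω θ / ∑ k, θ k ^ 2)
    (hΩt0 : Ωt 0 = 0) :
    ∀ θ : Fin d → ℝ,
      ((ae * (ℓe (fun i => ∑ k, θ k * e i k) + Ω θ) + be : ℝ) : EReal) =
      -(⨅ q : {q : Finset (Fin m) → ℝ // ∑ I : Finset (Fin m), q I = 1},
          (((∑ I : Finset (Fin m), q.1 I * ∑ k, θ k * (π I k - Ωt θ * θ k) : ℝ) :
              EReal) +
            (μr : EReal) * ∑ I : Finset (Fin m), φr (q.1 I))) - (b : EReal) := by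
  intro θ
  set z : Fin m → ℝ := fun i => ∑ k, θ k * e i k with hz
  set c : ℝ := ae * Ω θ with hc
  have hC : Ωt θ * ∑ k, θ k ^ 2 = c := by
    rcases eq_or_ne θ 0 with h | h
    · simp [h, hΩt0, hΩ0, hc]
    · have hne : (∑ k, θ k ^ 2) ≠ 0 := by
        have hpos : 0 < ∑ k, θ k ^ 2 := by
          obtain ⟨k, hk⟩ : ∃ k, θ k ≠ 0 := by
            by_contra hcon
            push_neg at hcon
            exact h (funext hcon)
          exact Finset.sum_pos' (fun j _ => sq_nonneg _)
            ⟨k, Finset.mem_univ k, by positivity⟩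
        exact ne_of_gt hpos
      rw [hΩt θ h, hc]
      field_simp
  -- rewrite the inner sum
  have hsum : ∀ (q : {q : Finset (Fin m) → ℝ // ∑ I : Finset (Fin m), q I = 1}),
      (∑ I : Finset (Fin m), q.1 I * ∑ k, θ k * (π I k - Ωt θ * θ k) : ℝ) =
      (∑ I : Finset (Fin m), q.1 I * ∑ i ∈ I, z i) - c := by
    intro q
    have hIn : ∀ I : Finset (Fin m),
        (∑ k, θ k * (π I k - Ωt θ * θ k)) = (∑ i ∈ I, z i) - c := by
      intro I
      have h1 : (∑ k, θ k * π I k) = ∑ i ∈ I, z i := by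
        simp only [hπ, hz, Finset.sum_apply, Finset.mul_sum]
        exact Finset.sum_comm
      have h2 : (∑ k, θ k * (Ωt θ * θ k)) = c := by
        rw [← hC, Finset.mul_sum]
        congr 1; ext k; ring
      calc (∑ k, θ k * (π I k - Ωt θ * θ k))
          = (∑ k, θ k * π I k) - ∑ k, θ k * (Ωt θ * θ k) := by
            rw [← Finset.sum_sub_distrib]; congr 1; ext k; ring
        _ = (∑ i ∈ I, z i) - c := by rw [h1, h2]
    calc (∑ I : Finset (Fin m), q.1 I * ∑ k, θ k * (π I k - Ωt θ * θ k) : ℝ)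
        = ∑ I : Finset (Fin m), (q.1 I * ∑ i ∈ I, z i - q.1 I * c) := by
          apply Finset.sum_congr rfl
          intro I _
          rw [hIn I]; ring
      _ = (∑ I : Finset (Fin m), q.1 I * ∑ i ∈ I, z i) -
            (∑ I : Finset (Fin m), q.1 I) * c := by
          rw [Finset.sum_sub_distrib, Finset.sum_mul]
      _ = (∑ I : Finset (Fin m), q.1 I * ∑ i ∈ I, z i) - c := by rw [q.2, one_mul]
  -- the infimum equals LrStar z - c
  have hinf : (⨅ q : {q : Finset (Fin m) → ℝ // ∑ I : Finset (Fin m), q I = 1},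
      (((∑ I : Finset (Fin m), q.1 I * ∑ k, θ k * (π I k - Ωt θ * θ k) : ℝ) :
          EReal) + (μr : EReal) * ∑ I : Finset (Fin m), φr (q.1 I))) =
      LrStar m φr μr z + ((-c : ℝ) : EReal) := by
    haveI : Nonempty {q : Finset (Fin m) → ℝ // ∑ I : Finset (Fin m), q I = 1} :=
      ⟨⟨fun I => if I = ∅ then 1 else 0, by simp⟩⟩
    rw [LrStar, ← my_iInf_add_coe]
    congr 1
    ext q
    rw [hsum q]
    push_cast
    rw [sub_eq_add_neg, add_right_comm]
  -- LeStar z is a finite real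
  have hLe : LeStar m φe μe z = ((-(ae * ℓe z + be) : ℝ) : EReal) := by
    have := hlin z
    rw [← neg_neg (LeStar m φe μe z), this]
    push_cast
    ring_nf
  have hLr : LrStar m φr μr z = ((-(ae * ℓe z + be) - b : ℝ) : EReal) := by
    have h1 : LrStar m φr μr z = LeStar m φe μe z - (b : EReal) := by
      rw [hprop z, EReal.add_sub_cancel_right]
    rw [h1, hLe]
    norm_cast
  rw [hinf, hLr]
  norm_cast
  ring
end

section
/- Let m ≥ 1, d ≥ 1, let Ω be a norm on ℝ^d with dual norm Ω*(v) = sup { v·x : x ∈ ℝ^d, Ω(x) ≤ 1 }. Let e_1, ..., e_m ∈ ℝ^d be edge vectors, and for each subset I ⊆ [m] let π_I = Σ_{i∈I} e_i and let z_I ∈ ℝ^d be an arbitrary noise vector. Then for every θ ∈ ℝ^d: (1/2^m) Σ_{I⊆[m]} exp( −θ·(π_I + z_I) ) ≤ exp( Σ_{i∈[m]} log( 1 + exp(−θ·e_i) ) + ( max_{I⊆[m]} Ω*(z_I) ) · Ω(θ) ). Equivalently, the exponential rado loss over the noise-protected rados is at most exp of m times the Ω-regularized logistic loss over the clean examples with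 regularization weight (1/m)·max_I Ω*(z_I). -/
section aux

variable {d : ℕ} (Ω : (Fin d → ℝ) → ℝ)

theorem aux_sum_le (hΩ_add : ∀ x y, Ω (x + y) ≤ Ω x + Ω y)
    (hΩ_zero : Ω 0 = 0) {ι : Type*} (s : Finset ι) (f : ι → Fin d → ℝ) :
    Ω (∑ i ∈ s, f i) ≤ ∑ i ∈ s, Ω (f i) := by
  classical
  induction s using Finset.induction_on with
  | empty => simp [hΩ_zero]
  | insert a s h ih =>
      rw [Finset.sum_insert h, Finset.sum_insert h]
      exact le_trans (hΩ_add _ _) (by linarith)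

/-- lower norm bound: there is `c > 0` with `c * ‖x‖ ≤ Ω x` for all `x`. -/
theorem aux_lower (hd : 1 ≤ d)
    (hΩ_nonneg : ∀ x, 0 ≤ Ω x)
    (hΩ_add : ∀ x y, Ω (x + y) ≤ Ω x + Ω y)
    (hΩ_smul : ∀ (c : ℝ) (x : Fin d → ℝ), Ω (c • x) = |c| * Ω x)
    (hΩ_def : ∀ x, Ω x = 0 ↔ x = 0) :
    ∃ c > 0, ∀ x, c * ‖x‖ ≤ Ω x := by
  classical
  have hΩ_zero : Ω 0 = 0 := (hΩ_def 0).mpr rfl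
  -- upper bound: Ω x ≤ C ‖x‖
  set C : ℝ := ∑ k : Fin d, Ω (fun j => if k = j then (1:ℝ) else 0) with hC
  have hCnn : 0 ≤ C := Finset.sum_nonneg fun _ _ => hΩ_nonneg _
  have hupper : ∀ x, Ω x ≤ C * ‖x‖ := by
    intro x
    calc Ω x = Ω (∑ k : Fin d, (x k) • fun j => if k = j then (1:ℝ) else 0) := by
              rw [← pi_eq_sum_univ x]
      _ ≤ ∑ k : Fin d, Ω ((x k) • fun j => if k = j then (1:ℝ) else 0) :=
              aux_sum_le Ω hΩ_add hΩ_zero _ _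
      _ = ∑ k : Fin d, |x k| * Ω (fun j => if k = j then (1:ℝ) else 0) := by
              simp [hΩ_smul]
      _ ≤ ∑ k : Fin d, ‖x‖ * Ω (fun j => if k = j then (1:ℝ) else 0) := by
              refine Finset.sum_le_sum fun k _ => ?_
              exact mul_le_mul_of_nonneg_right
                (by simpa using norm_le_pi_norm x k) (hΩ_nonneg _)
      _ = C * ‖x‖ := by rw [← Finset.mul_sum, mul_comm]
  -- Ω is Lipschitz hence continuous
  have hcont : Continuous Ω := by
    have hlip : LipschitzWith C.toNNReal Ω := by
      refine LipschitzWith.of_dist_le_mul fun x y => ?_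
      have h1 : Ω x ≤ Ω y + Ω (x - y) := by
        have := hΩ_add (x - y) y; simpa [sub_add_cancel, add_comm] using this
      have h2 : Ω y ≤ Ω x + Ω (y - x) := by
        have := hΩ_add (y - x) x; simpa [sub_add_cancel, add_comm] using this
      have hxy : Ω (y - x) = Ω (x - y) := by
        have := hΩ_smul (-1) (x - y)
        simpa [neg_sub] using this
      have habs : |Ω x - Ω y| ≤ Ω (x - y) := by
        rw [abs_sub_le_iff]; constructor <;> [linarith; linarith [hxy ▸ h2]]
      calc dist (Ω x) (Ω y) = |Ω x - Ω y| := Real.dist_eq _ _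
        _ ≤ Ω (x - y) := habs
        _ ≤ C * ‖x - y‖ := hupper _
        _ = C.toNNReal * dist x y := by
            rw [dist_eq_norm, Real.coe_toNNReal C hCnn]
    exact hlip.continuous
  haveI : Nonempty (Fin d) := ⟨⟨0, hd⟩⟩
  haveI : Nontrivial (Fin d → ℝ) := Function.nontrivial
  have hsph : (Metric.sphere (0 : Fin d → ℝ) 1).Nonempty :=
    NormedSpace.sphere_nonempty.mpr zero_le_one
  obtain ⟨x₀, hx₀mem, hx₀min⟩ :=
    (isCompact_sphere (0 : Fin d → ℝ) 1).exists_isMinOn hsph hcont.continuousOn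
  have hx₀norm : ‖x₀‖ = 1 := by simpa using hx₀mem
  have hx₀ne : x₀ ≠ 0 := by
    intro h; rw [h] at hx₀norm; simp at hx₀norm
  have hc : 0 < Ω x₀ := by
    rcases lt_or_eq_of_le (hΩ_nonneg x₀) with h | h
    · exact h
    · exact absurd ((hΩ_def x₀).mp h.symm) hx₀ne
  refine ⟨Ω x₀, hc, fun x => ?_⟩
  rcases eq_or_ne x 0 with rfl | hx
  · simp [hΩ_zero]
  · have hxn : (0:ℝ) < ‖x‖ := norm_pos_iff.mpr hx
    have hmem : ‖x‖⁻¹ • x ∈ Metric.sphere (0 : Fin d → ℝ) 1 := by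
      simp [norm_smul, abs_of_pos (inv_pos.mpr hxn), inv_mul_cancel₀ hxn.ne']
    have := hx₀min hmem
    have h2 : Ω x₀ ≤ ‖x‖⁻¹ * Ω x := by
      simpa [hΩ_smul, abs_of_pos (inv_pos.mpr hxn)] using this
    calc Ω x₀ * ‖x‖ ≤ (‖x‖⁻¹ * Ω x) * ‖x‖ :=
          mul_le_mul_of_nonneg_right h2 hxn.le
      _ = Ω x := by field_simp

end aux

/-- Theorem 6 (second part): for any norm `Ω` on `ℝ^d` with dual norm `Ω*`,
edge vectors `e_i`, rados `π_I = Σ_{i∈I} e_i` and arbitrary noise vectors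
`z_I`, the exponential rado loss over the noise-protected rados is bounded by
the exponential of the `Ω`-regularized logistic loss over the clean examples:
`(1/2^m) Σ_I exp(−θ·(π_I + z_I)) ≤
  exp( Σ_i log(1 + exp(−θ·e_i)) + (max_I Ω*(z_I))·Ω(θ) )`. -/
theorem stmt13 (m d : ℕ) (hm : 1 ≤ m) (hd : 1 ≤ d)
    (Ω : (Fin d → ℝ) → ℝ)
    -- `Ω` is a norm
    (hΩ_nonneg : ∀ x, 0 ≤ Ω x)
    (hΩ_add : ∀ x y, Ω (x + y) ≤ Ω x + Ω y)
    (hΩ_smul : ∀ (c : ℝ) (x : Fin d → ℝ), Ω (c • x) = |c| * Ω x)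
    (hΩ_def : ∀ x, Ω x = 0 ↔ x = 0)
    -- `Ω*` is its dual norm
    (Ωs : (Fin d → ℝ) → ℝ)
    (hΩs : ∀ v, Ωs v =
      sSup {r : ℝ | ∃ x : Fin d → ℝ, Ω x ≤ 1 ∧ r = ∑ k, v k * x k})
    (e : Fin m → Fin d → ℝ)
    (π : Finset (Fin m) → Fin d → ℝ) (hπ : ∀ I, π I = ∑ i ∈ I, e i)
    (zn : Finset (Fin m) → Fin d → ℝ) :
    ∀ θ : Fin d → ℝ,
      (1 / 2 ^ m) * ∑ I : Finset (Fin m),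
          Real.exp (-∑ k, θ k * (π I k + zn I k)) ≤
      Real.exp ((∑ i, Real.log (1 + Real.exp (-∑ k, θ k * e i k))) +
        (⨆ I : Finset (Fin m), Ωs (zn I)) * Ω θ) := by
  classical
  intro θ
  obtain ⟨c, hc, hlow⟩ := aux_lower Ω hd hΩ_nonneg hΩ_add hΩ_smul hΩ_def
  have hΩ_zero : Ω 0 = 0 := (hΩ_def 0).mpr rfl
  -- the defining set of `Ωs v` is nonempty and bounded above
  have hne : ∀ v : Fin d → ℝ,
      ((0:ℝ) ∈ {r : ℝ | ∃ x : Fin d → ℝ, Ω x ≤ 1 ∧ r = ∑ k, v k * x k}) := by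
    intro v
    exact ⟨0, by simp [hΩ_zero], by simp⟩
  have hbdd : ∀ v : Fin d → ℝ,
      BddAbove {r : ℝ | ∃ x : Fin d → ℝ, Ω x ≤ 1 ∧ r = ∑ k, v k * x k} := by
    intro v
    refine ⟨(∑ k, |v k|) * c⁻¹, fun r hr => ?_⟩
    obtain ⟨x, hx1, rfl⟩ := hr
    have hxnorm : ‖x‖ ≤ c⁻¹ := by
      have h1 : c * ‖x‖ ≤ 1 := le_trans (hlow x) hx1
      rw [show c⁻¹ = 1 / c by ring]
      rw [le_div_iff₀ hc]
      nlinarith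
    calc ∑ k, v k * x k ≤ ∑ k, |v k| * c⁻¹ := by
          refine Finset.sum_le_sum fun k _ => ?_
          calc v k * x k ≤ |v k * x k| := le_abs_self _
            _ = |v k| * |x k| := abs_mul _ _
            _ ≤ |v k| * c⁻¹ :=
                mul_le_mul_of_nonneg_left
                  (le_trans (by simpa using norm_le_pi_norm x k) hxnorm)
                  (abs_nonneg _)
      _ = (∑ k, |v k|) * c⁻¹ := by rw [Finset.sum_mul]
  -- key dual bound
  have hdual : ∀ v : Fin d → ℝ, (-∑ k, θ k * v k) ≤ Ωs v * Ω θ := by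
    intro v
    rcases eq_or_ne (Ω θ) 0 with h0 | h0
    · have : θ = 0 := (hΩ_def θ).mp h0
      simp [this, h0, hΩ_zero]
    · have hΩθ : 0 < Ω θ := lt_of_le_of_ne (hΩ_nonneg θ) (Ne.symm h0)
      have hxmem : (-∑ k, θ k * v k) / Ω θ ∈
          {r : ℝ | ∃ x : Fin d → ℝ, Ω x ≤ 1 ∧ r = ∑ k, v k * x k} := by
        refine ⟨(Ω θ)⁻¹ • (-θ), ?_, ?_⟩
        · rw [hΩ_smul]
          have : Ω (-θ) = Ω θ := by
            have := hΩ_smul (-1) θ; simpa using this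
          rw [this, abs_of_pos (inv_pos.mpr hΩθ), inv_mul_cancel₀ hΩθ.ne']
        · simp only [Pi.smul_apply, Pi.neg_apply, smul_eq_mul]
          rw [div_eq_mul_inv]
          calc (-∑ k, θ k * v k) * (Ω θ)⁻¹
              = ∑ k, v k * ((Ω θ)⁻¹ * -θ k) := by
                rw [← Finset.sum_neg_distrib, Finset.sum_mul]
                exact Finset.sum_congr rfl fun k _ => by ring
            _ = ∑ k, v k * ((Ω θ)⁻¹ • (-θ)) k := by
                simp [smul_eq_mul]
      have := le_csSup (hbdd v) hxmem
      rw [← hΩs v] at this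
      calc (-∑ k, θ k * v k) = ((-∑ k, θ k * v k) / Ω θ) * Ω θ := by
            field_simp
        _ ≤ Ωs v * Ω θ := mul_le_mul_of_nonneg_right this hΩθ.le
    -- sup bound
  set M : ℝ := ⨆ I : Finset (Fin m), Ωs (zn I) with hM
  have hle_M : ∀ I : Finset (Fin m), Ωs (zn I) ≤ M := by
    intro I
    rw [hM]
    exact le_ciSup (f := fun J : Finset (Fin m) => Ωs (zn J))
      (Set.Finite.bddAbove (Set.finite_range _)) I
  have hzbound : ∀ I : Finset (Fin m),
      (-∑ k, θ k * zn I k) ≤ M * Ω θ :=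
    fun I => le_trans (hdual (zn I))
      (mul_le_mul_of_nonneg_right (hle_M I) (hΩ_nonneg θ))
  -- rewrite each rado term
  have hterm : ∀ I : Finset (Fin m),
      Real.exp (-∑ k, θ k * (π I k + zn I k)) ≤
      (∏ i ∈ I, Real.exp (-∑ k, θ k * e i k)) * Real.exp (M * Ω θ) := by
    intro I
    have hsplit : (-∑ k, θ k * (π I k + zn I k)) =
        (-∑ k, θ k * π I k) + (-∑ k, θ k * zn I k) := by
      rw [← neg_add, ← Finset.sum_add_distrib]
      congr 1; exact Finset.sum_congr rfl fun k _ => by ring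
    have h1 : ∑ k, θ k * π I k = ∑ i ∈ I, ∑ k, θ k * e i k := by
      simp only [hπ I, Finset.sum_apply, Finset.mul_sum]
      exact Finset.sum_comm
    have hpi : (-∑ k, θ k * π I k) = ∑ i ∈ I, (-∑ k, θ k * e i k) := by
      rw [h1]
      exact (Finset.sum_neg_distrib _).symm
    rw [hsplit, Real.exp_add, hpi, Real.exp_sum]
    exact mul_le_mul_of_nonneg_left (Real.exp_le_exp.mpr (hzbound I))
      (Finset.prod_nonneg fun _ _ => (Real.exp_nonneg _))
  have hsum : ∑ I : Finset (Fin m),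
      Real.exp (-∑ k, θ k * (π I k + zn I k)) ≤
      (∏ i, (1 + Real.exp (-∑ k, θ k * e i k))) * Real.exp (M * Ω θ) := by
    calc ∑ I : Finset (Fin m), Real.exp (-∑ k, θ k * (π I k + zn I k))
        ≤ ∑ I : Finset (Fin m),
            (∏ i ∈ I, Real.exp (-∑ k, θ k * e i k)) * Real.exp (M * Ω θ) :=
          Finset.sum_le_sum fun I _ => hterm I
      _ = (∑ I : Finset (Fin m), ∏ i ∈ I, Real.exp (-∑ k, θ k * e i k)) *
            Real.exp (M * Ω θ) := by rw [← Finset.sum_mul]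
      _ = (∏ i, (1 + Real.exp (-∑ k, θ k * e i k))) * Real.exp (M * Ω θ) := by
          congr 1
          have := Fintype.prod_add (fun i : Fin m =>
            Real.exp (-∑ k, θ k * e i k)) (fun _ => (1:ℝ))
          simp only [Finset.prod_const_one, mul_one] at this
          rw [show (fun i : Fin m => 1 + Real.exp (-∑ k, θ k * e i k)) =
              fun i => Real.exp (-∑ k, θ k * e i k) + 1 from
              funext fun i => add_comm _ _] at *
          rw [this]
  -- final
  have hRHS : Real.exp ((∑ i, Real.log (1 + Real.exp (-∑ k, θ k * e i k))) +
      M * Ω θ) =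
      (∏ i, (1 + Real.exp (-∑ k, θ k * e i k))) * Real.exp (M * Ω θ) := by
    rw [Real.exp_add, Real.exp_sum]
    congr 1
    exact Finset.prod_congr rfl fun i _ =>
      Real.exp_log (by positivity)
  rw [hRHS]
  have hpos : (0:ℝ) ≤ ∑ I : Finset (Fin m),
      Real.exp (-∑ k, θ k * (π I k + zn I k)) :=
    Finset.sum_nonneg fun _ _ => (Real.exp_nonneg _)
  have h2m : (1:ℝ) / 2 ^ m ≤ 1 := by
    rw [div_le_one (by positivity)]
    exact one_le_pow₀ (by norm_num)
  calc (1 / 2 ^ m) * ∑ I : Finset (Fin m),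
        Real.exp (-∑ k, θ k * (π I k + zn I k))
      ≤ 1 * ∑ I : Finset (Fin m),
        Real.exp (-∑ k, θ k * (π I k + zn I k)) :=
        mul_le_mul_of_nonneg_right h2m hpos
    _ = ∑ I : Finset (Fin m),
        Real.exp (-∑ k, θ k * (π I k + zn I k)) := one_mul _
    _ ≤ _ := hsum
end

section
/- Let n ≥ 1, d ≥ 1, T ≥ 1, let π_1, ..., π_n ∈ ℝ^d (rados), ω ∈ ℝ, and Ω : ℝ^d → ℝ with Ω(0) = 0. Let ι(1), ..., ι(T) ∈ [d] and α_1, ..., α_T ∈ ℝ, and define θ_0 = 0 and θ_t = θ_{t−1} + α_t · 1_{ι(t)} (1_k the k-th canonical basis vector of ℝ^d). Define weights w_{0,j} = 1/n for j ∈ [n], δ_t = ω·( Ω(θ_t) − Ω(θ_{t−1}) ), normalizers Z_t = Σ_{j∈[n]} w_{t−1,j} exp( −α_t π_{j,ι(t)} + δ_t ) and w_{t,j} = w_{t−1,j} exp( −α_t π_{j,ι(t)} + δ_t ) / Z_t. Then the regularized exponential rado loss of θ_T equals the product of the normalizers: (1/n) Σ_{j∈[n]} exp( −θ_T·π_j +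 ω Ω(θ_T) ) = Π_{t=1}^T Z_t. -/
/-- The weight-unravelling identity behind `Ω-R.AdaBoost`: with
`θ_t = θ_{t−1} + α_t·1_{ι(t)}`, `δ_t = ω(Ω(θ_t) − Ω(θ_{t−1}))`,
normalizers `Z_t = Σ_j w_{t−1,j} exp(−α_t π_{j,ι(t)} + δ_t)` and weight
updates `w_{t,j} = w_{t−1,j} exp(−α_t π_{j,ι(t)} + δ_t)/Z_t` starting from
`w_{0,j} = 1/n` and `θ_0 = 0`, the regularized exponential rado loss of `θ_T`
equals the product of the normalizers:
`(1/n) Σ_j exp(−θ_T·π_j + ω Ω(θ_T)) = Π_{t=1}^T Z_t`. -/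
theorem stmt14 (n d T : ℕ) (hn : 1 ≤ n) (hd : 1 ≤ d) (hT : 1 ≤ T)
    (π : Fin n → Fin d → ℝ) (ω : ℝ)
    (Ω : (Fin d → ℝ) → ℝ) (hΩ0 : Ω 0 = 0)
    (ι : Fin T → Fin d) (α : Fin T → ℝ)
    (θ : ℕ → Fin d → ℝ) (hθ0 : θ 0 = 0)
    (hθ : ∀ t : Fin T, θ (t.val + 1) = θ t.val + α t • (Pi.single (ι t) 1 : Fin d → ℝ))
    (w : ℕ → Fin n → ℝ) (hw0 : ∀ j, w 0 j = 1 / n)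
    (δ Z : Fin T → ℝ)
    (hδ : ∀ t : Fin T, δ t = ω * (Ω (θ (t.val + 1)) - Ω (θ t.val)))
    (hZ : ∀ t : Fin T,
      Z t = ∑ j, w t.val j * Real.exp (-α t * π j (ι t) + δ t))
    (hw : ∀ t : Fin T, ∀ j,
      w (t.val + 1) j = w t.val j * Real.exp (-α t * π j (ι t) + δ t) / Z t) :
    (1 / n) * ∑ j, Real.exp (-(∑ k, θ T k * π j k) + ω * Ω (θ T)) =
      ∏ t : Fin T, Z t := by
  haveI : Nonempty (Fin n) := ⟨⟨0, hn⟩⟩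
  have hnpos : (0:ℝ) < n := by exact_mod_cast hn
  have key : ∀ t, t ≤ T → (∀ j, 0 < w t j) ∧
      (∀ j, w t j * ∏ s ∈ Finset.univ.filter (fun s : Fin T => s.val < t), Z s
        = (1 / n) * Real.exp (-(∑ k, θ t k * π j k) + ω * Ω (θ t))) := by
    intro t
    induction t with
    | zero =>
      intro _
      refine ⟨fun j => by rw [hw0]; positivity, fun j => ?_⟩
      have he : (Finset.univ.filter (fun s : Fin T => s.val < 0)) = ∅ := by simp
      rw [he, Finset.prod_empty, hw0, hθ0]
      simp [hΩ0]
    | succ t ih =>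
      intro ht1
      have htT : t < T := ht1
      obtain ⟨ihpos, ihid⟩ := ih (le_of_lt htT)
      set t' : Fin T := ⟨t, htT⟩ with ht'
      have hZpos : 0 < Z t' := by
        rw [hZ t']
        exact Finset.sum_pos (fun j _ => mul_pos (ihpos j) (Real.exp_pos _))
          Finset.univ_nonempty
      have hwpos : ∀ j, 0 < w (t+1) j := by
        intro j
        have := hw t' j
        simp only [ht'] at this
        rw [this]
        exact div_pos (mul_pos (ihpos j) (Real.exp_pos _)) hZpos
      refine ⟨hwpos, fun j => ?_⟩
      have hset : (Finset.univ.filter (fun s : Fin T => s.val < t+1))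
          = insert t' (Finset.univ.filter (fun s : Fin T => s.val < t)) := by
        ext s
        simp only [Finset.mem_filter, Finset.mem_univ, true_and, Finset.mem_insert,
          Fin.ext_iff]
        have htv : (t' : ℕ) = t := rfl
        omega
      have hnm : t' ∉ Finset.univ.filter (fun s : Fin T => s.val < t) := by simp [ht']
      rw [hset, Finset.prod_insert hnm]
      have hwj := hw t' j
      simp only [ht'] at hwj
      rw [hwj]
      have hstep : w t j * Real.exp (-α t' * π j (ι t') + δ t') / Z t' *
          (Z t' * ∏ s ∈ Finset.univ.filter (fun s : Fin T => s.val < t), Z s)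
          = (w t j * ∏ s ∈ Finset.univ.filter (fun s : Fin T => s.val < t), Z s) *
            Real.exp (-α t' * π j (ι t') + δ t') := by
        field_simp
      rw [hstep, ihid j, mul_assoc, ← Real.exp_add]
      congr 2
      have hθt := hθ t'
      simp only [ht'] at hθt
      have hsum : (∑ k, θ (t+1) k * π j k)
          = (∑ k, θ t k * π j k) + α t' * π j (ι t') := by
        rw [hθt]
        simp only [Pi.add_apply, Pi.smul_apply, smul_eq_mul, add_mul]
        rw [Finset.sum_add_distrib]
        congr 1
        rw [Finset.sum_congr rfl (fun k _ => by rw [mul_assoc])]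
        rw [← Finset.mul_sum]
        congr 1
        simp [Pi.single_apply]
        rfl
      rw [hδ t']
      simp only [ht']
      rw [hsum]
      ring
  obtain ⟨hpos, hid⟩ := key T le_rfl
  have huniv : (Finset.univ.filter (fun s : Fin T => s.val < T)) = Finset.univ := by
    simp [Fin.is_lt]
  have hsum1 : (∑ j, w T j) = 1 := by
    set t' : Fin T := ⟨T - 1, by omega⟩ with ht'
    have hTe : t'.val + 1 = T := by simp [ht']; omega
    have hZpos : Z t' ≠ 0 := by
      rw [hZ t']
      exact (Finset.sum_pos (fun j _ =>
        mul_pos ((key t'.val (by omega)).1 j) (Real.exp_pos _)) Finset.univ_nonempty).ne'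
    calc (∑ j, w T j) = ∑ j, w t'.val j * Real.exp (-α t' * π j (ι t') + δ t') / Z t' := by
          refine Finset.sum_congr rfl (fun j _ => ?_)
          have h := hw t' j
          rw [hTe] at h
          rw [h]
      _ = (∑ j, w t'.val j * Real.exp (-α t' * π j (ι t') + δ t')) / Z t' := by
          rw [Finset.sum_div]
      _ = 1 := by rw [← hZ t', div_self hZpos]
  calc (1 / (n:ℝ)) * ∑ j, Real.exp (-(∑ k, θ T k * π j k) + ω * Ω (θ T))
      = ∑ j, (1 / (n:ℝ)) * Real.exp (-(∑ k, θ T k * π j k) + ω * Ω (θ T)) := by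
        rw [Finset.mul_sum]
    _ = ∑ j, w T j * ∏ t : Fin T, Z t := by
        refine Finset.sum_congr rfl (fun j _ => ?_)
        rw [← hid j, huniv]
    _ = (∑ j, w T j) * ∏ t : Fin T, Z t := by rw [← Finset.sum_mul]
    _ = ∏ t : Fin T, Z t := by rw [hsum1, one_mul]
end

section
/- Let n ≥ 1, let w ∈ ℝ^n with w_j ≥ 0 for all j and Σ_{j=1}^n w_j = 1, let v ∈ ℝ^n with −1 ≤ v_j ≤ 1 for all j, set r = Σ_{j=1}^n w_j v_j and assume −1 < r < 1. With α = (1/2)·log( (1+r)/(1−r) ), one has Σ_{j=1}^n w_j exp( −α v_j ) ≤ √(1 − r²). -/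
/-- The classical AdaBoost potential bound: if `w` lies in the simplex,
`v_j ∈ [−1,1]`, `r = Σ_j w_j v_j ∈ (−1,1)` and
`α = (1/2) log((1+r)/(1−r))`, then `Σ_j w_j exp(−α v_j) ≤ √(1 − r²)`. -/
theorem stmt15 (n : ℕ) (hn : 1 ≤ n)
    (w : Fin n → ℝ) (hw : ∀ j, 0 ≤ w j) (hwsum : ∑ j, w j = 1)
    (v : Fin n → ℝ) (hv : ∀ j, -1 ≤ v j ∧ v j ≤ 1)
    (r : ℝ) (hr : r = ∑ j, w j * v j) (hr1 : -1 < r) (hr2 : r < 1)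
    (α : ℝ) (hα : α = (1 / 2) * Real.log ((1 + r) / (1 - r))) :
    ∑ j, w j * Real.exp (-α * v j) ≤ Real.sqrt (1 - r ^ 2) := by
  have h1 : (0:ℝ) < 1 + r := by linarith
  have h2 : (0:ℝ) < 1 - r := by linarith
  have hea : Real.exp α = Real.sqrt ((1 + r) / (1 - r)) := by
    rw [hα, Real.sqrt_eq_rpow, Real.rpow_def_of_pos (by positivity), mul_comm]
  have heb : Real.exp (-α) = Real.sqrt ((1 - r) / (1 + r)) := by
    rw [← Real.exp_log (x := Real.sqrt ((1 - r) / (1 + r))) (by positivity),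
      Real.log_sqrt (by positivity), hα, Real.log_div (by positivity) (by positivity),
      Real.log_div (by positivity) (by positivity)]
    ring
  have key : ∀ j, Real.exp (-α * v j) ≤
      (1 + v j) / 2 * Real.exp (-α) + (1 - v j) / 2 * Real.exp α := by
    intro j
    have h := convexOn_exp.2 (Set.mem_univ (-α)) (Set.mem_univ α)
      (by linarith [(hv j).1] : (0:ℝ) ≤ (1 + v j) / 2)
      (by linarith [(hv j).2] : (0:ℝ) ≤ (1 - v j) / 2) (by ring)
    simp only [smul_eq_mul] at h
    have harg : (1 + v j) / 2 * (-α) + (1 - v j) / 2 * α = -α * v j := by ring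
    rwa [harg] at h
  have step : ∑ j, w j * Real.exp (-α * v j) ≤
      ∑ j, (w j * ((1 + v j) / 2 * Real.exp (-α)) + w j * ((1 - v j) / 2 * Real.exp α)) := by
    apply Finset.sum_le_sum
    intro j _
    have := mul_le_mul_of_nonneg_left (key j) (hw j)
    linarith [this]
  rw [Finset.sum_add_distrib] at step
  have e1 : ∑ j, w j * ((1 + v j) / 2 * Real.exp (-α)) = (1 + r) / 2 * Real.exp (-α) := by
    have : ∀ j, w j * ((1 + v j) / 2 * Real.exp (-α))
        = (w j + w j * v j) * (Real.exp (-α) / 2) := fun j => by ring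
    rw [Finset.sum_congr rfl fun j _ => this j, ← Finset.sum_mul, Finset.sum_add_distrib,
      hwsum, ← hr]
    ring
  have e2 : ∑ j, w j * ((1 - v j) / 2 * Real.exp α) = (1 - r) / 2 * Real.exp α := by
    have : ∀ j, w j * ((1 - v j) / 2 * Real.exp α)
        = (w j - w j * v j) * (Real.exp α / 2) := fun j => by ring
    rw [Finset.sum_congr rfl fun j _ => this j, ← Finset.sum_mul, Finset.sum_sub_distrib,
      hwsum, ← hr]
    ring
  rw [e1, e2, hea, heb] at step
  refine step.trans (le_of_eq ?_)
  have ha2 : Real.sqrt (1 + r) ^ 2 = 1 + r := Real.sq_sqrt h1.le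
  have hb2 : Real.sqrt (1 - r) ^ 2 = 1 - r := Real.sq_sqrt h2.le
  have ha : 0 < Real.sqrt (1 + r) := Real.sqrt_pos.2 h1
  have hb : 0 < Real.sqrt (1 - r) := Real.sqrt_pos.2 h2
  rw [show (1:ℝ) - r ^ 2 = (1 + r) * (1 - r) by ring, Real.sqrt_mul h1.le,
    Real.sqrt_div h2.le, Real.sqrt_div h1.le]
  rw [← ha2, ← hb2]
  field_simp
  rw [Real.sqrt_sq hb.le, Real.sqrt_sq ha.le]
  nlinarith [ha2, hb2, ha, hb]
end

section
/- For every γ ∈ (0,1], every b with 0 < b ≤ 3γ/11, and every z with γ ≤ z < 1: log( 1/(1−z²) ) − b · log( (1+z)/(1−z) ) ≥ b z². -/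
lemma log_one_add_le_cubic (x : ℝ) (hx : 0 ≤ x) :
    Real.log (1 + x) ≤ x - x ^ 2 / 2 + x ^ 3 / 3 := by
  set f : ℝ → ℝ := fun t => t - t ^ 2 / 2 + t ^ 3 / 3 - Real.log (1 + t) with hf
  have hder : ∀ y : ℝ, 0 ≤ y → HasDerivAt f (1 - y + y ^ 2 - 1 / (1 + y)) y := by
    intro y hy
    have h1y : (1 : ℝ) + y ≠ 0 := by positivity
    have hlog : HasDerivAt (fun t : ℝ => Real.log (1 + t)) (1 / (1 + y)) y := by
      have h := (((hasDerivAt_id y).const_add (1 : ℝ)).log h1y)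
      simpa using h
    have hpoly : HasDerivAt (fun t : ℝ => t - t ^ 2 / 2 + t ^ 3 / 3) (1 - y + y ^ 2) y := by
      have h := ((hasDerivAt_id y).sub ((hasDerivAt_pow 2 y).div_const 2)).add
        ((hasDerivAt_pow 3 y).div_const 3)
      convert h using 1
      · rfl
      · rfl
      · rfl
      · norm_num
    exact hpoly.sub hlog
  have mono : MonotoneOn f (Set.Ici (0 : ℝ)) := by
    apply monotoneOn_of_deriv_nonneg (convex_Ici 0)
    · intro y hy
      exact (hder y hy).differentiableAt.continuousAt.continuousWithinAt
    · intro y hy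
      have hy' : 0 < y := Set.mem_Ioi.mp (by rwa [interior_Ici] at hy)
      exact ((hder y hy'.le).differentiableAt).differentiableWithinAt
    · intro y hy
      have hy' : 0 < y := Set.mem_Ioi.mp (by rwa [interior_Ici] at hy)
      rw [(hder y hy'.le).deriv]
      have h1y : (0:ℝ) < 1 + y := by linarith
      have : 1 - y + y ^ 2 - 1 / (1 + y) = y ^ 3 / (1 + y) := by
        field_simp; ring
      rw [this]
      exact div_nonneg (by positivity) h1y.le
  have h0 : f 0 ≤ f x := mono (Set.mem_Ici.2 le_rfl) (Set.mem_Ici.2 hx) hx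
  simp [hf] at h0
  linarith

lemma neg_log_one_sub_ge_cubic (x : ℝ) (hx : 0 ≤ x) (hx1 : x < 1) :
    x + x ^ 2 / 2 + x ^ 3 / 3 ≤ -Real.log (1 - x) := by
  set f : ℝ → ℝ := fun t => -Real.log (1 - t) - t - t ^ 2 / 2 - t ^ 3 / 3 with hf
  have hder : ∀ y : ℝ, 0 ≤ y → y < 1 → HasDerivAt f (1 / (1 - y) - 1 - y - y ^ 2) y := by
    intro y hy hy1
    have h1y : (1 : ℝ) - y ≠ 0 := by intro h; linarith [sub_eq_zero.mp h]
    have hlog : HasDerivAt (fun t : ℝ => -Real.log (1 - t)) (1 / (1 - y)) y := by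
      have h := (((hasDerivAt_id y).const_sub (1 : ℝ)).log h1y).neg
      convert h using 1
      · rfl
      · rfl
      · rfl
      · simp only [id]; field_simp
    have hpoly : HasDerivAt (fun t : ℝ => t + t ^ 2 / 2 + t ^ 3 / 3) (1 + y + y ^ 2) y := by
      have h := ((hasDerivAt_id y).add ((hasDerivAt_pow 2 y).div_const 2)).add
        ((hasDerivAt_pow 3 y).div_const 3)
      convert h using 1
      · rfl
      · rfl
      · rfl
      · norm_num
    have h := hlog.sub hpoly
    convert h using 1
    · rfl
    · rfl
    · funext t; simp [hf]; ring
    · ring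
  have mono : MonotoneOn f (Set.Ico (0 : ℝ) 1) := by
    apply monotoneOn_of_deriv_nonneg (convex_Ico 0 1)
    · intro y hy
      exact (hder y hy.1 hy.2).differentiableAt.continuousAt.continuousWithinAt
    · intro y hy
      rw [interior_Ico] at hy
      exact ((hder y hy.1.le hy.2).differentiableAt).differentiableWithinAt
    · intro y hy
      rw [interior_Ico] at hy
      rw [(hder y hy.1.le hy.2).deriv]
      have h1y : (0:ℝ) < 1 - y := by linarith [hy.2]
      have : 1 / (1 - y) - 1 - y - y ^ 2 = y ^ 3 / (1 - y) := by
        field_simp; ring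
      rw [this]
      exact div_nonneg (pow_nonneg hy.1.le 3) h1y.le
  have h0 : f 0 ≤ f x := mono (Set.mem_Ico.2 ⟨le_rfl, one_pos⟩)
    (Set.mem_Ico.2 ⟨hx, hx1⟩) hx
  simp [hf] at h0
  linarith

/-- The key inequality in the lasso/ℓ∞ boosting proof: for every `γ ∈ (0,1]`,
every `b` with `0 < b ≤ 3γ/11`, and every `z` with `γ ≤ z < 1`,
`log(1/(1−z²)) − b·log((1+z)/(1−z)) ≥ b z²`. -/
theorem stmt17 (γ b z : ℝ) (hγ0 : 0 < γ) (hγ1 : γ ≤ 1)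
    (hb0 : 0 < b) (hb : b ≤ 3 * γ / 11) (hzγ : γ ≤ z) (hz1 : z < 1) :
    Real.log (1 / (1 - z ^ 2)) - b * Real.log ((1 + z) / (1 - z)) ≥ b * z ^ 2 := by
  have hz0 : 0 < z := lt_of_lt_of_le hγ0 hzγ
  have h1z : (0:ℝ) < 1 - z := by linarith
  have h1pz : (0:ℝ) < 1 + z := by linarith
  have hsq : 1 - z ^ 2 = (1 - z) * (1 + z) := by ring
  have hrw1 : Real.log (1 / (1 - z ^ 2)) = -(Real.log (1 - z) + Real.log (1 + z)) := by
    rw [one_div, Real.log_inv, hsq, Real.log_mul h1z.ne' h1pz.ne']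
  have hrw2 : Real.log ((1 + z) / (1 - z)) = Real.log (1 + z) - Real.log (1 - z) :=
    Real.log_div h1pz.ne' h1z.ne'
  rw [hrw1, hrw2]
  have hA := log_one_add_le_cubic z hz0.le
  have hB := neg_log_one_sub_ge_cubic z hz0.le hz1
  have hb1 : b < 1 := by linarith
  -- Goal: -(L1 + L2) - b*(L2 - L1) ≥ b z², i.e. (1-b)(-L1) - (1+b)L2 ≥ b z²
  -- Using (1-b)(z+z²/2+z³/3) - (1+b)(z - z²/2 + z³/3) ≥ b z²
  nlinarith [mul_le_mul_of_nonneg_left hA (by linarith : (0:ℝ) ≤ 1 + b),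
    mul_le_mul_of_nonneg_left hB (by linarith : (0:ℝ) ≤ 1 - b),
    mul_nonneg (mul_nonneg hb0.le hz0.le) (sub_nonneg.2 hz1.le),
    mul_nonneg (sub_nonneg.2 hzγ) (by linarith : (0:ℝ) ≤ 1 - 5 * b / 3),
    mul_nonneg (sub_nonneg.2 hb) hγ0.le,
    mul_nonneg (mul_nonneg hb0.le hγ0.le) (sub_nonneg.2 hγ1),
    mul_nonneg hz0.le (mul_nonneg (sub_nonneg.2 hzγ) (by linarith : (0:ℝ) ≤ 1 - 5*b/3)),
    mul_nonneg hz0.le (mul_nonneg (sub_nonneg.2 hb) hγ0.le),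
    mul_nonneg hz0.le (mul_nonneg (mul_nonneg hb0.le hγ0.le) (sub_nonneg.2 hγ1)),
    mul_nonneg hz0.le (mul_nonneg (mul_nonneg hb0.le hz0.le) (sub_nonneg.2 hz1.le))]
end

section
/- For every a with 0 < a < 1/5 there exists z* > 0 such that for all z with 0 ≤ z ≤ min(z*, 1) and z < 1: log( 1/(1−z²) ) − a · ( log( (1+z)/(1−z) ) )² ≥ a z². (Moreover the conclusion holds with z* = 0.98 when a = 1/7, and with z* = 0.999 when a = 1/10.) -/
open Real

private lemma st18_lemA (y : ℝ) (h0 : 0 ≤ y) (h1 : y < 1) :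
    2 * y ≤ Real.log ((1 + y) / (1 - y)) := by
  have hd : ∀ x ∈ Set.Icc (0:ℝ) y, HasDerivAt
      (fun x => Real.log (1 + x) - Real.log (1 - x) - 2 * x)
      (1 / (1 + x) + 1 / (1 - x) - 2) x := by
    intro x hx
    have hx1 : x < 1 := lt_of_le_of_lt hx.2 h1
    have h1p : (0:ℝ) < 1 + x := by have := hx.1; linarith
    have h1m : (0:ℝ) < 1 - x := by linarith
    have d1 : HasDerivAt (fun x : ℝ => 1 + x) 1 x := by
      simpa using (hasDerivAt_id x).const_add 1
    have d2 : HasDerivAt (fun x : ℝ => 1 - x) (-1) x := by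
      exact (hasDerivAt_id x).const_sub 1
    have l1 : HasDerivAt (fun x : ℝ => Real.log (1 + x)) (1 / (1 + x)) x :=
      d1.log (ne_of_gt h1p)
    have l2 : HasDerivAt (fun x : ℝ => Real.log (1 - x)) (-1 / (1 - x)) x :=
      d2.log (ne_of_gt h1m)
    have d3 : HasDerivAt (fun x : ℝ => 2 * x) 2 x := by
      simpa using (hasDerivAt_id x).const_mul 2
    have : HasDerivAt (fun x => Real.log (1 + x) - Real.log (1 - x) - 2 * x)
        (1 / (1 + x) - -1 / (1 - x) - 2) x := (l1.sub l2).sub d3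
    convert this using 1
    ring
  have hmono : MonotoneOn (fun x => Real.log (1 + x) - Real.log (1 - x) - 2 * x)
      (Set.Icc (0:ℝ) y) := by
    apply monotoneOn_of_deriv_nonneg (convex_Icc 0 y)
    · exact fun x hx => (hd x hx).continuousAt.continuousWithinAt
    · intro x hx
      rw [interior_Icc] at hx
      exact (hd x (Set.mem_Icc_of_Ioo hx)).differentiableAt.differentiableWithinAt
    · intro x hx
      rw [interior_Icc] at hx
      rw [(hd x (Set.mem_Icc_of_Ioo hx)).deriv]
      have hx0 : 0 < x := hx.1
      have hx1 : x < 1 := lt_of_lt_of_le hx.2 h1.le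
      have h1p : (0:ℝ) < 1 + x := by linarith
      have h1m : (0:ℝ) < 1 - x := by linarith
      have key : 1 / (1 + x) + 1 / (1 - x) - 2 = 2 * x ^ 2 / ((1 + x) * (1 - x)) := by
        field_simp
        ring
      rw [key]
      positivity
  have h00 : (0:ℝ) ∈ Set.Icc (0:ℝ) y := by constructor <;> linarith
  have hyy : y ∈ Set.Icc (0:ℝ) y := by constructor <;> linarith
  have := hmono h00 hyy h0
  simp only [Real.log_one] at this
  rw [Real.log_div (by linarith : (1:ℝ)+y ≠ 0) (by intro h; rw [sub_eq_zero] at h; linarith)]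
  norm_num at this
  linarith

private lemma st18_lemB (x : ℝ) (hx : 1 ≤ x) : 2 * (x - 1) / (x + 1) ≤ Real.log x := by
  have hy0 : 0 ≤ (x - 1) / (x + 1) := div_nonneg (by linarith) (by linarith)
  have hy1 : (x - 1) / (x + 1) < 1 := by
    rw [div_lt_one (by linarith)]; linarith
  have := st18_lemA _ hy0 hy1
  have hrw : (1 + (x - 1) / (x + 1)) / (1 - (x - 1) / (x + 1)) = x := by
    field_simp
    ring
  rw [hrw] at this
  calc 2 * (x - 1) / (x + 1) = 2 * ((x - 1) / (x + 1)) := by ring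
    _ ≤ Real.log x := this

noncomputable def st18_QP (t : ℝ) : ℝ :=
  1 + t + t^2/2 + t^3/6 + t^4/24 + t^5/120 + t^6/720 + t^7/5040

private lemma st18_QP_le_exp (t : ℝ) (ht : 0 ≤ t) : st18_QP t ≤ Real.exp t := by
  have h := Real.sum_le_exp_of_nonneg ht 8
  have heq : ∑ i ∈ Finset.range 8, t ^ i / (Nat.factorial i : ℝ) = st18_QP t := by
    simp [Finset.sum_range_succ, Nat.factorial, st18_QP]
  linarith [heq ▸ h]

private lemma st18_QP_ge_one (t : ℝ) (ht : 0 ≤ t) : 1 ≤ st18_QP t := by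
  rw [st18_QP]
  nlinarith [pow_nonneg ht 2, pow_nonneg ht 3, pow_nonneg ht 4, pow_nonneg ht 5,
    pow_nonneg ht 6, pow_nonneg ht 7]

set_option maxHeartbeats 1000000 in
private lemma st18_key (a t0 T' : ℝ) (ha : 0 < a) (ht0 : 0 < t0)
    (hsmall : ∀ t : ℝ, 0 ≤ t → t ≤ t0 →
      5 * a * t ^ 2 * (st18_QP t + 1) ^ 2 ≤ 4 * (st18_QP t - 1) ^ 2)
    (hlarge : ∀ t : ℝ, t0 ≤ t → t ≤ T' →
      4 * a * t ^ 2 + a + 2 * Real.log 2 ≤ 2 * t)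
    (z : ℝ) (hz0 : 0 ≤ z) (hz1 : z < 1)
    (hT : Real.log ((1 + z) / (1 - z)) ≤ 2 * T') :
    Real.log (1 / (1 - z ^ 2)) - a * (Real.log ((1 + z) / (1 - z))) ^ 2 ≥ a * z ^ 2 := by
  have h1z : (0:ℝ) < 1 - z := by linarith
  have h1p : (0:ℝ) < 1 + z := by linarith
  have hu0 : (0:ℝ) < (1 + z) / (1 - z) := by positivity
  set L : ℝ := Real.log ((1 + z) / (1 - z)) with hL
  have hL0 : 0 ≤ L := Real.log_nonneg (by rw [le_div_iff₀ h1z]; linarith)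
  have hexpL : Real.exp L = (1 + z) / (1 - z) := by rw [hL, Real.exp_log hu0]
  clear_value L
  set t : ℝ := L / 2 with htdef
  have ht : 0 ≤ t := by positivity
  have hzt : z ≤ t := by
    have h := st18_lemA z hz0 hz1
    rw [← hL] at h
    rw [htdef]; linarith only [h]
  have hL2t : L = 2 * t := by rw [htdef]; ring
  clear_value t
  set E : ℝ := Real.exp t with hEdef
  have hE0 : 0 < E := Real.exp_pos t
  have hE1 : 1 ≤ E := Real.one_le_exp ht
  have hlogE : Real.log E = t := Real.log_exp t
  have hE2 : E ^ 2 = (1 + z) / (1 - z) := by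
    calc E ^ 2 = E * E := by ring
      _ = Real.exp (t + t) := (Real.exp_add t t).symm
      _ = Real.exp L := by rw [hL2t]; ring_nf
      _ = (1 + z) / (1 - z) := hexpL
  clear_value E
  have hEz : E ^ 2 * (1 - z) = 1 + z := by
    rw [hE2]; field_simp
  set x : ℝ := (E + 1/E) / 2 with hxdef
  have hx1 : 1 ≤ x := by
    rw [hxdef, le_div_iff₀ (by norm_num : (0:ℝ) < 2)]
    have hinv : 2 - E ≤ 1/E := by
      rw [← sub_nonneg]
      have h : 1/E - (2 - E) = (E-1)^2 / E := by field_simp; ring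
      rw [h]; positivity
    linarith only [hinv, hE1]
  clear_value x
  have hx0 : 0 < x := lt_of_lt_of_le one_pos hx1
  have hxval : x * ((1 - z) * E) = 1 := by
    rw [hxdef]
    field_simp
    linear_combination hEz
  have hzz : (0:ℝ) < 1 - z^2 := by nlinarith only [hz0, hz1]
  have hxsq : 1 / (1 - z ^ 2) = x ^ 2 := by
    have h3 : ((1-z)*E)^2 = 1 - z^2 := by
      have h4 : ((1-z)*E)^2 = (1-z)*(E^2*(1-z)) := by ring
      rw [h4, hEz]; ring
    have h2' : (x*((1-z)*E))^2 = 1 := by rw [hxval]; norm_num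
    have h2 : x^2 * (1-z^2) = 1 := by
      rw [← h3]; linear_combination h2'
    rw [div_eq_iff (ne_of_gt hzz)]
    linarith only [h2]
  have hlhs : Real.log (1 / (1 - z ^ 2)) = 2 * Real.log x := by
    rw [hxsq, Real.log_pow]
    norm_num
  rw [hlhs, hL2t]
  rcases le_or_gt t t0 with hcase | hcase
  · -- small regime
    set Q : ℝ := st18_QP t with hQdef
    have hQE : Q ≤ E := hEdef ▸ st18_QP_le_exp t ht
    have hQ1 : 1 ≤ Q := hQdef ▸ st18_QP_ge_one t ht
    have hsm := hsmall t ht hcase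
    rw [← hQdef] at hsm
    clear_value Q
    have hQ0 : 0 < Q := lt_of_lt_of_le one_pos hQ1
    set X : ℝ := (Q + 1/Q) / 2 with hXdef
    have hX1 : 1 ≤ X := by
      rw [hXdef, le_div_iff₀ (by norm_num : (0:ℝ) < 2)]
      have h : 1/Q - (2 - Q) = (Q-1)^2 / Q := by field_simp; ring
      have hpos : 0 ≤ (Q-1)^2 / Q := by positivity
      linarith only [h, hpos, hQ1]
    have hXx : X ≤ x := by
      rw [hXdef, hxdef]
      have hdiff : (E + 1/E) - (Q + 1/Q) = (E - Q) * (E*Q - 1)/(E*Q) := by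
        field_simp; ring
      have hnn : 0 ≤ (E - Q) * (E*Q - 1)/(E*Q) := by
        apply div_nonneg
        · exact mul_nonneg (by linarith only [hQE]) (by nlinarith only [hQ1, hQE, hE1])
        · positivity
      linarith only [hdiff, hnn]
    have hXfrac : (X - 1) / (X + 1) = (Q - 1)^2 / (Q + 1)^2 := by
      have hXne : X + 1 ≠ 0 := by intro h; linarith only [h, hX1]
      rw [div_eq_div_iff hXne (pow_ne_zero 2 (by linarith only [hQ1] : Q + 1 ≠ 0))]
      rw [hXdef]
      field_simp
      ring
    clear_value X
    have hlogx : 2 * (x - 1) / (x + 1) ≤ Real.log x := st18_lemB x hx1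
    have hmono : (X - 1) / (X + 1) ≤ (x - 1) / (x + 1) := by
      rw [div_le_div_iff₀ (by linarith only [hX1]) (by linarith only [hx1])]
      nlinarith only [hXx]
    have hfrac : 5 * a * t ^ 2 / 4 ≤ (Q - 1)^2 / (Q+1)^2 := by
      rw [div_le_div_iff₀ (by norm_num) (by positivity)]
      nlinarith only [hsm]
    have c2 : 5*a*t^2/4 ≤ (X-1)/(X+1) := by rw [hXfrac]; exact hfrac
    have c3 : 2*(x-1)/(x+1) = 2*((x-1)/(x+1)) := by ring
    have hlogx2 : 5 * a * t^2 ≤ 2 * Real.log x := by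
      rw [c3] at hlogx
      linarith only [hlogx, hmono, c2]
    have hz2t2 : z^2 ≤ t^2 := by nlinarith only [hzt, hz0]
    have haz : a * z^2 ≤ a * t^2 := mul_le_mul_of_nonneg_left hz2t2 ha.le
    have hexp : a * (2*t)^2 = 4*(a*t^2) := by ring
    have h5 : 5*a*t^2 = 5*(a*t^2) := by ring
    rw [ge_iff_le, hexp]
    rw [h5] at hlogx2
    linarith only [hlogx2, haz]
  · -- large regime
    have htT : t ≤ T' := by rw [htdef]; linarith only [hT]
    have hlogx_ge : t - Real.log 2 ≤ Real.log x := by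
      rw [hxdef, Real.log_div (by positivity) (by norm_num)]
      have hEle : E ≤ E + 1/E := by
        have h : 0 < 1/E := by positivity
        linarith only [h]
      have h1 : Real.log E ≤ Real.log (E + 1/E) := Real.log_le_log hE0 hEle
      linarith only [h1, hlogE]
    have hq := hlarge t hcase.le htT
    have hz2 : z^2 ≤ 1 := by nlinarith only [hz0, hz1]
    have haz : a * z^2 ≤ a * 1 := mul_le_mul_of_nonneg_left hz2 ha.le
    have hexp : a * (2*t)^2 = 4*a*t^2 := by ring
    rw [ge_iff_le, hexp]
    linarith only [hlogx_ge, hq, haz]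

private lemma st18_hsmall_gen (s : ℝ) (t : ℝ) (ht : 0 ≤ t)
    (hR : s * (st18_QP t + 1) ≤ 2 * (1 + t/2 + t^2/6 + t^3/24 + t^4/120 + t^5/720 + t^6/5040))
    (hs : 0 ≤ s) (a : ℝ) (ha : 5 * a ≤ s^2) :
    5 * a * t ^ 2 * (st18_QP t + 1) ^ 2 ≤ 4 * (st18_QP t - 1) ^ 2 := by
  set R : ℝ := 1 + t/2 + t^2/6 + t^3/24 + t^4/120 + t^5/720 + t^6/5040 with hRdef
  have hfac : st18_QP t - 1 = t * R := by rw [st18_QP, hRdef]; ring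
  have hQ1 : 0 ≤ st18_QP t + 1 := by
    rw [st18_QP]
    nlinarith only [ht, pow_nonneg ht 2, pow_nonneg ht 3, pow_nonneg ht 4, pow_nonneg ht 5,
      pow_nonneg ht 6, pow_nonneg ht 7]
  have hsQ : 0 ≤ s * (st18_QP t + 1) := mul_nonneg hs hQ1
  have h2 : (s * (st18_QP t + 1))^2 ≤ (2*R)^2 := pow_le_pow_left₀ hsQ hR 2
  have h3 := mul_le_mul_of_nonneg_left h2 (sq_nonneg t)
  rw [hfac]
  nlinarith only [h3, ha, sq_nonneg (t*(st18_QP t + 1)), sq_nonneg (t*(st18_QP t+1)*s)]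

private lemma st18_hR7 (t : ℝ) (ht : 0 ≤ t) (h13 : t ≤ 13/10) :
    (423/500) * (st18_QP t + 1) ≤
      2 * (1 + t/2 + t^2/6 + t^3/24 + t^4/120 + t^5/720 + t^6/5040) := by
  rw [st18_QP]
  nlinarith only [ht, h13, mul_nonneg ht (by linarith : (0:ℝ) ≤ 13/10 - t),
    mul_nonneg (pow_nonneg ht 2) (by linarith : (0:ℝ) ≤ 13/10 - t),
    mul_nonneg (pow_nonneg ht 3) (by linarith : (0:ℝ) ≤ 13/10 - t),
    mul_nonneg (pow_nonneg ht 4) (by linarith : (0:ℝ) ≤ 13/10 - t),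
    mul_nonneg (pow_nonneg ht 5) (by linarith : (0:ℝ) ≤ 13/10 - t),
    mul_nonneg (pow_nonneg ht 6) (by linarith : (0:ℝ) ≤ 13/10 - t)]

private lemma st18_hR10 (t : ℝ) (ht : 0 ≤ t) (h17 : t ≤ 17/10) :
    (442/625) * (st18_QP t + 1) ≤
      2 * (1 + t/2 + t^2/6 + t^3/24 + t^4/120 + t^5/720 + t^6/5040) := by
  rw [st18_QP]
  nlinarith only [ht, h17, mul_nonneg ht (by linarith : (0:ℝ) ≤ 17/10 - t),
    mul_nonneg (pow_nonneg ht 2) (by linarith : (0:ℝ) ≤ 17/10 - t),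
    mul_nonneg (pow_nonneg ht 3) (by linarith : (0:ℝ) ≤ 17/10 - t),
    mul_nonneg (pow_nonneg ht 4) (by linarith : (0:ℝ) ≤ 17/10 - t),
    mul_nonneg (pow_nonneg ht 5) (by linarith : (0:ℝ) ≤ 17/10 - t),
    mul_nonneg (pow_nonneg ht 6) (by linarith : (0:ℝ) ≤ 17/10 - t)]

private lemma st18_log99 : Real.log 99 ≤ 4604/1000 := by
  have hp : (99:ℝ)^(25:ℕ) ≤ 2^(166:ℕ) := by norm_num
  have h := Real.log_le_log (by positivity) hp
  rw [Real.log_pow, Real.log_pow] at h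
  push_cast at h
  nlinarith only [h, Real.log_two_lt_d9]

private lemma st18_log1999 : Real.log 1999 ≤ 2 * (38037/10000) := by
  have hp : (1999:ℝ)^(40:ℕ) ≤ 2^(439:ℕ) := by exact_mod_cast (by decide : (1999:ℕ)^40 ≤ 2^439)
  have h := Real.log_le_log (by positivity) hp
  rw [Real.log_pow, Real.log_pow] at h
  push_cast at h
  nlinarith only [h, Real.log_two_lt_d9]

/-- The key inequality in the ridge boosting proof: for every `0 < a < 1/5`
there is a `z* > 0` such that
`log(1/(1−z²)) − a·(log((1+z)/(1−z)))² ≥ a z²` for all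
`0 ≤ z ≤ min(z*, 1)`, `z < 1`. Moreover the conclusion holds with `z* = 0.98`
when `a = 1/7`, and with `z* = 0.999` when `a = 1/10`. -/
theorem stmt18 (a : ℝ) (ha0 : 0 < a) (ha5 : a < 1 / 5) :
    (∃ zs : ℝ, 0 < zs ∧
      ∀ z : ℝ, 0 ≤ z → z ≤ min zs 1 → z < 1 →
        Real.log (1 / (1 - z ^ 2)) -
          a * (Real.log ((1 + z) / (1 - z))) ^ 2 ≥ a * z ^ 2) ∧
    (a = 1 / 7 →
      ∀ z : ℝ, 0 ≤ z → z ≤ min 0.98 1 → z < 1 →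
        Real.log (1 / (1 - z ^ 2)) -
          a * (Real.log ((1 + z) / (1 - z))) ^ 2 ≥ a * z ^ 2) ∧
    (a = 1 / 10 →
      ∀ z : ℝ, 0 ≤ z → z ≤ min 0.999 1 → z < 1 →
        Real.log (1 / (1 - z ^ 2)) -
          a * (Real.log ((1 + z) / (1 - z))) ^ 2 ≥ a * z ^ 2) := by
  refine ⟨?_, ?_, ?_⟩
  · -- general part
    have h1a : (0:ℝ) < 1 - a := by linarith
    have hr0 : 0 ≤ a / (1 - a) := by positivity
    have hr4 : a / (1 - a) < 1/4 := by rw [div_lt_iff₀ h1a]; linarith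
    have hs0 : 0 ≤ Real.sqrt (a / (1 - a)) := Real.sqrt_nonneg _
    have hsr : Real.sqrt (a / (1 - a)) < 1/2 := by
      have h := Real.sqrt_lt_sqrt hr0 hr4
      rwa [show (1/4:ℝ) = (1/2)^2 by norm_num,
        Real.sqrt_sq (by norm_num : (0:ℝ) ≤ 1/2)] at h
    refine ⟨1 - 2 * Real.sqrt (a / (1 - a)), by linarith, ?_⟩
    intro z hz0 hzmin hz1
    have hzzs : z ≤ 1 - 2 * Real.sqrt (a / (1 - a)) := le_trans hzmin (min_le_left _ _)
    have h1z : (0:ℝ) < 1 - z := by linarith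
    have h1p : (0:ℝ) < 1 + z := by linarith
    have hzz : (0:ℝ) < 1 - z^2 := by nlinarith only [hz0, hz1]
    have hsq : (2 * Real.sqrt (a / (1 - a)))^2 = 4 * (a / (1 - a)) := by
      rw [mul_pow, Real.sq_sqrt hr0]; norm_num
    have hsq' : 4 * (a / (1 - a)) ≤ (1 - z)^2 := by
      have hA : 0 ≤ 1 - z - 2 * Real.sqrt (a / (1 - a)) := by linarith
      have hB : 0 ≤ 1 - z + 2 * Real.sqrt (a / (1 - a)) := by linarith
      nlinarith only [mul_nonneg hA hB, hsq]
    have hkey : 4 * a ≤ (1 - a) * (1 - z)^2 := by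
      have h := mul_le_mul_of_nonneg_left hsq' h1a.le
      have h4 : (1 - a) * (4 * (a / (1 - a))) = 4 * a := by field_simp
      linarith only [h, h4.ge, h4.le]
    have hlog1 : z^2 ≤ Real.log (1 / (1 - z^2)) := by
      rw [one_div, Real.log_inv]
      have h := Real.log_le_sub_one_of_pos hzz
      linarith only [h]
    have hu0 : (0:ℝ) < (1 + z) / (1 - z) := by positivity
    have hL0 : 0 ≤ Real.log ((1 + z) / (1 - z)) :=
      Real.log_nonneg (by rw [le_div_iff₀ h1z]; linarith)
    have hLb : Real.log ((1 + z) / (1 - z)) ≤ 2 * z / (1 - z) := by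
      have h := Real.log_le_sub_one_of_pos hu0
      have he : (1 + z) / (1 - z) - 1 = 2 * z / (1 - z) := by field_simp; ring
      linarith only [h, he.ge, he.le]
    have hq0 : 0 ≤ 2 * z / (1 - z) := by positivity
    have hL2 : (Real.log ((1 + z) / (1 - z)))^2 ≤ (2 * z / (1 - z))^2 :=
      pow_le_pow_left₀ hL0 hLb 2
    have hmain : a * (2 * z / (1 - z))^2 + a * z^2 ≤ z^2 := by
      have hzsq : (0:ℝ) < (1 - z)^2 := by positivity
      have heq : z^2 - (a * (2 * z / (1 - z))^2 + a * z^2)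
          = z^2 * ((1 - a) * (1 - z)^2 - 4 * a) / (1 - z)^2 := by
        field_simp; ring
      have hnn : 0 ≤ z^2 * ((1 - a) * (1 - z)^2 - 4 * a) / (1 - z)^2 :=
        div_nonneg (mul_nonneg (sq_nonneg z) (by linarith only [hkey])) hzsq.le
      linarith only [heq.ge, heq.le, hnn]
    have haL : a * (Real.log ((1 + z) / (1 - z)))^2 ≤ a * (2 * z / (1 - z))^2 :=
      mul_le_mul_of_nonneg_left hL2 ha0.le
    linarith only [hlog1, hmain, haL]
  · -- a = 1/7
    intro ha7 z hz0 hzmin hz1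
    subst ha7
    have hz98 : z ≤ 0.98 := le_trans hzmin (min_le_left _ _)
    norm_num at hz98
    have h1z : (0:ℝ) < 1 - z := by linarith
    apply st18_key (1/7) (13/10) (2302/1000) (by norm_num) (by norm_num) ?_ ?_ z hz0 hz1 ?_
    · intro t ht h13
      exact st18_hsmall_gen (423/500) t ht (st18_hR7 t ht h13) (by norm_num) _ (by norm_num)
    · intro t h1 h2
      nlinarith only [Real.log_two_lt_d9, h1, h2,
        mul_nonneg (by linarith : (0:ℝ) ≤ t - 13/10) (by linarith : (0:ℝ) ≤ 2302/1000 - t)]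
    · have hu : (1 + z) / (1 - z) ≤ 99 := by rw [div_le_iff₀ h1z]; linarith
      have hu0 : (0:ℝ) < (1 + z) / (1 - z) := by positivity
      have h := Real.log_le_log hu0 hu
      linarith only [h, st18_log99]
  · -- a = 1/10
    intro ha10 z hz0 hzmin hz1
    subst ha10
    have hz99 : z ≤ 0.999 := le_trans hzmin (min_le_left _ _)
    norm_num at hz99
    have h1z : (0:ℝ) < 1 - z := by linarith
    apply st18_key (1/10) (17/10) (38037/10000) (by norm_num) (by norm_num) ?_ ?_ z hz0 hz1 ?_
    · intro t ht h17
      exact st18_hsmall_gen (442/625) t ht (st18_hR10 t ht h17) (by norm_num) _ (by norm_num)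
    · intro t h1 h2
      nlinarith only [Real.log_two_lt_d9, h1, h2,
        mul_nonneg (by linarith : (0:ℝ) ≤ t - 17/10) (by linarith : (0:ℝ) ≤ 38037/10000 - t)]
    · have hu : (1 + z) / (1 - z) ≤ 1999 := by rw [div_le_iff₀ h1z]; linarith
      have hu0 : (0:ℝ) < (1 + z) / (1 - z) := by positivity
      have h := Real.log_le_log hu0 hu
      linarith only [h, st18_log1999]
end

section
/- (Boosting with lasso.) Let n ≥ 1, d ≥ 1, T ≥ 1, let π_1, ..., π_n ∈ ℝ^d with π_{*k} := max_{j∈[n]} |π_{j,k}| > 0 for every k ∈ [d]. Fix γ_WL ∈ (0,1) and a with 0 < a < 3/11, and set ω = a γ_WL min_{k∈[d]} max_{j∈[n]} |π_{j,k}|. Run the following recursion with Ω = ‖·‖₁: θ_0 = 0, w_{0,j} = 1/n; at each step t = 1, ..., T a feature ι(t) ∈ [d] is chosen, r_t = (1/π_{*ι(t)}) Σ_{j∈[n]} w_{t−1,j} π_{j,ι(t)}, assumed to satisfy γ_WL ≤ |r_t| < 1 (γ_WL-weak learner), α_t = (1/(2π_{*ι(t)})) log( (1+r_t)/(1−r_t)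 ), θ_t = θ_{t−1} + α_t·1_{ι(t)}, δ_t = ω·( ‖θ_t‖₁ − ‖θ_{t−1}‖₁ ), Z_t = Σ_{j∈[n]} w_{t−1,j} exp( −α_t π_{j,ι(t)} + δ_t ), and w_{t,j} = w_{t−1,j} exp( −α_t π_{j,ι(t)} + δ_t )/Z_t. Then the classifier θ_T satisfies (1/n) Σ_{j∈[n]} exp( −θ_T·π_j + ω ‖θ_T‖₁ ) ≤ exp( −a γ_WL T γ_WL² / 2 ). -/
set_option maxHeartbeats 1000000


lemma aux_log1 (x : ℝ) (hx : 0 ≤ x) : Real.log (1+x) ≤ x - x^2/2 + x^3/3 := by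
  have hder : ∀ t : ℝ, (0:ℝ) < 1 + t →
      HasDerivAt (fun t : ℝ => t - t^2/2 + t^3/3 - Real.log (1+t)) (t^3/(1+t)) t := by
    intro t ht
    have h1 : HasDerivAt (fun t : ℝ => 1 + t) 1 t := by
      simpa using (hasDerivAt_id t).const_add 1
    have h2 : HasDerivAt (fun t : ℝ => Real.log (1+t)) (1/(1+t)) t := by
      simpa using h1.log (by linarith)
    have h3 : HasDerivAt (fun t : ℝ => t - t^2/2 + t^3/3) (1 - t + t^2) t := by
      have := ((hasDerivAt_id t).sub ((hasDerivAt_pow 2 t).div_const 2)).add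
        ((hasDerivAt_pow 3 t).div_const 3)
      refine this.congr_deriv ?_
      norm_num
    have := h3.sub h2
    refine this.congr_deriv ?_
    field_simp
    ring
  have mono : MonotoneOn (fun t : ℝ => t - t^2/2 + t^3/3 - Real.log (1+t)) (Set.Ici 0) := by
    apply monotoneOn_of_deriv_nonneg (convex_Ici 0)
    · apply ContinuousOn.sub (by fun_prop)
      apply ContinuousOn.log (by fun_prop)
      intro t ht
      simp only [Set.mem_Ici] at ht
      positivity
    · intro t ht
      rw [interior_Ici] at ht
      simp only [Set.mem_Ioi] at ht
      exact (hder t (by linarith)).differentiableAt.differentiableWithinAt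
    · intro t ht
      rw [interior_Ici] at ht
      simp only [Set.mem_Ioi] at ht
      rw [(hder t (by linarith)).deriv]
      positivity
  have h0 := mono (Set.self_mem_Ici) (Set.mem_Ici.mpr hx) hx
  simp only [Real.log_one] at h0
  norm_num at h0
  linarith

lemma aux_log2 (x : ℝ) (hx : 0 ≤ x) (hx1 : x < 1) :
    Real.log (1-x) ≤ -x - x^2/2 - x^3/3 := by
  have hder : ∀ t : ℝ, t < 1 →
      HasDerivAt (fun t : ℝ => -t - t^2/2 - t^3/3 - Real.log (1-t)) (t^3/(1-t)) t := by
    intro t ht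
    have h1 : HasDerivAt (fun t : ℝ => 1 - t) (-1) t := by
      simpa using ((hasDerivAt_id t).const_sub 1)
    have h2 : HasDerivAt (fun t : ℝ => Real.log (1-t)) (-1/(1-t)) t := by
      simpa using h1.log (by intro h; linarith [h])
    have h3 : HasDerivAt (fun t : ℝ => -t - t^2/2 - t^3/3) (-1 - t - t^2) t := by
      have := (((hasDerivAt_id t).neg).sub ((hasDerivAt_pow 2 t).div_const 2)).sub
        ((hasDerivAt_pow 3 t).div_const 3)
      refine this.congr_deriv ?_
      norm_num
    have := h3.sub h2
    refine this.congr_deriv ?_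
    have : (1:ℝ) - t ≠ 0 := by intro h; linarith
    field_simp
    ring
  have mono : MonotoneOn (fun t : ℝ => -t - t^2/2 - t^3/3 - Real.log (1-t)) (Set.Ico 0 1) := by
    apply monotoneOn_of_deriv_nonneg (convex_Ico 0 1)
    · apply ContinuousOn.sub (by fun_prop)
      apply ContinuousOn.log (by fun_prop)
      intro t ht
      simp only [Set.mem_Ico] at ht
      intro h; linarith
    · intro t ht
      rw [interior_Ico] at ht
      exact (hder t ht.2).differentiableAt.differentiableWithinAt
    · intro t ht
      rw [interior_Ico] at ht
      rw [(hder t ht.2).deriv]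
      have h1 : (0:ℝ) < 1 - t := by linarith [ht.2]
      have h2 : (0:ℝ) ≤ t^3 := pow_nonneg ht.1.le 3
      exact div_nonneg h2 h1.le
  have h0 := mono (Set.mem_Ico.mpr ⟨le_refl 0, one_pos⟩) (Set.mem_Ico.mpr ⟨hx, hx1⟩) hx
  simp only [Real.log_one] at h0
  norm_num at h0
  linarith

set_option maxHeartbeats 800000 in
lemma key_ineq (a γ s : ℝ) (hγ0 : 0 < γ) (hγ1 : γ < 1) (ha0 : 0 < a) (ha1 : a < 3/11)
    (hs1 : γ ≤ s) (hs2 : s < 1) :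
    (a*γ/2) * Real.log ((1+s)/(1-s)) + Real.log (1-s^2)/2 ≤ -(a*γ*γ^2)/2 := by
  have hs0 : 0 < s := lt_of_lt_of_le hγ0 hs1
  have h1p : (0:ℝ) < 1 + s := by linarith
  have h1m : (0:ℝ) < 1 - s := by linarith
  have hdiv : Real.log ((1+s)/(1-s)) = Real.log (1+s) - Real.log (1-s) :=
    Real.log_div h1p.ne' h1m.ne'
  have hsq : Real.log (1-s^2) = Real.log (1+s) + Real.log (1-s) := by
    rw [show (1-s^2) = (1+s)*(1-s) by ring, Real.log_mul h1p.ne' h1m.ne']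
  rw [hdiv, hsq]
  have L1 := aux_log1 s hs0.le
  have L2 := aux_log2 s hs0.le hs2
  have hb : a*γ < 3*s/11 := by nlinarith
  have hb1 : a*γ < 1 := by nlinarith
  have hcoef1 : (0:ℝ) < (1 + a*γ)/2 := by nlinarith
  have hcoef2 : (0:ℝ) < (1 - a*γ)/2 := by nlinarith
  have hγs : γ^2 ≤ s^2 := by nlinarith
  have e1 : (a*γ)*(s + s^3/3 + s^2/2) ≤ (3*s/11)*(s + s^3/3 + s^2/2) :=
    mul_le_mul_of_nonneg_right hb.le (by positivity)
  have e2 : (3*s/11)*(s + s^3/3 + s^2/2) ≤ s^2/2 := by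
    nlinarith [mul_nonneg (mul_nonneg hs0.le hs0.le) (by linarith : (0:ℝ) ≤ 1 - s),
      mul_nonneg (mul_nonneg (mul_nonneg hs0.le hs0.le) hs0.le) (by linarith : (0:ℝ) ≤ 1 - s)]
  have e3 : (a*γ)*γ^2 ≤ (a*γ)*s^2 :=
    mul_le_mul_of_nonneg_left hγs (by positivity)
  have hbound : (a*γ)*s + (a*γ)*s^3/3 + (a*γ)*γ^2/2 ≤ s^2/2 := by nlinarith
  have hint1 := mul_le_mul_of_nonneg_left L1 hcoef1.le
  have hint2 := mul_le_mul_of_nonneg_left L2 hcoef2.le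
  nlinarith [hint1, hint2, hbound]

set_option maxHeartbeats 1000000 in

lemma conv_exp_bound (p x α : ℝ) (hp : 0 < p) (hx : |x| ≤ p) :
    Real.exp (-(α*x)) ≤ ((p - x)/(2*p)) * Real.exp (α*p) + ((p + x)/(2*p)) * Real.exp (-(α*p)) := by
  obtain ⟨hx1, hx2⟩ := abs_le.mp hx
  have h := convexOn_exp.2 (Set.mem_univ (α*p)) (Set.mem_univ (-(α*p)))
    (show (0:ℝ) ≤ (p - x)/(2*p) from div_nonneg (by linarith) (by linarith))
    (show (0:ℝ) ≤ (p + x)/(2*p) from div_nonneg (by linarith) (by linarith))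
    (by field_simp; ring)
  simp only [smul_eq_mul] at h
  have harg : (p-x)/(2*p)*(α*p) + (p+x)/(2*p)*(-(α*p)) = -(α*x) := by
    field_simp
    ring
  rwa [harg] at h

lemma step_bound {n : ℕ} (p : ℝ) (hp : 0 < p) (x : Fin n → ℝ) (hx : ∀ j, |x j| ≤ p)
    (v : Fin n → ℝ) (hv : ∀ j, 0 ≤ v j) (hv1 : ∑ j, v j = 1)
    (γ a r ω α δ : ℝ) (hγ0 : 0 < γ) (hγ1 : γ < 1) (ha0 : 0 < a) (ha1 : a < 3/11)
    (hr : r = (1/p) * ∑ j, v j * x j) (hr1 : γ ≤ |r|) (hr2 : |r| < 1)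
    (hω0 : 0 ≤ ω) (hωp : ω ≤ a*γ*p)
    (hα : α = (1/(2*p)) * Real.log ((1+r)/(1-r)))
    (hδ : δ ≤ ω * |α|) :
    ∑ j, v j * Real.exp (-α * x j + δ) ≤ Real.exp (-(a*γ*γ^2)/2) := by
  obtain ⟨hrm, hrp⟩ := abs_lt.mp hr2
  have h1p : (0:ℝ) < 1 + r := by linarith
  have h1m : (0:ℝ) < 1 - r := by linarith
  have hαp : α * p = Real.log ((1+r)/(1-r)) / 2 := by
    rw [hα]; field_simp
  set A := Real.log (1+r) with hA
  set B := Real.log (1-r) with hB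
  have hlogdiv : Real.log ((1+r)/(1-r)) = A - B := Real.log_div h1p.ne' h1m.ne'
  -- split off exp δ
  have hsplit : ∑ j, v j * Real.exp (-α * x j + δ)
      = Real.exp δ * ∑ j, v j * Real.exp (-(α * x j)) := by
    rw [Finset.mul_sum]
    apply Finset.sum_congr rfl
    intro j _
    rw [Real.exp_add]
    ring_nf
  -- convexity bound on the inner sum
  have hsum : ∑ j, v j * x j = r * p := by
    rw [hr]; field_simp
  have hinner : ∑ j, v j * Real.exp (-(α * x j))
      ≤ (1-r)/2 * Real.exp (α*p) + (1+r)/2 * Real.exp (-(α*p)) := by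
    calc ∑ j, v j * Real.exp (-(α * x j))
        ≤ ∑ j, v j * (((p - x j)/(2*p)) * Real.exp (α*p)
            + ((p + x j)/(2*p)) * Real.exp (-(α*p))) := by
          apply Finset.sum_le_sum
          intro j _
          exact mul_le_mul_of_nonneg_left (conv_exp_bound p (x j) α hp (hx j)) (hv j)
      _ = (Real.exp (α*p)/(2*p)) * (∑ j, (v j * p - v j * x j))
            + (Real.exp (-(α*p))/(2*p)) * (∑ j, (v j * p + v j * x j)) := by
          rw [Finset.mul_sum, Finset.mul_sum, ← Finset.sum_add_distrib]
          apply Finset.sum_congr rfl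
          intro j _
          field_simp
      _ = (1-r)/2 * Real.exp (α*p) + (1+r)/2 * Real.exp (-(α*p)) := by
          rw [Finset.sum_sub_distrib, Finset.sum_add_distrib, ← Finset.sum_mul, hv1, hsum]
          field_simp
  -- exact value of the optimal bound
  have hval : (1-r)/2 * Real.exp (α*p) + (1+r)/2 * Real.exp (-(α*p))
      = Real.exp (Real.log (1 - r^2)/2) := by
    have e1 : Real.exp (α*p) = Real.exp ((A - B)/2) := by rw [hαp, hlogdiv]
    have e2 : Real.exp (-(α*p)) = Real.exp ((B - A)/2) := by rw [hαp, hlogdiv]; ring_nf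
    have hlr : Real.log (1 - r^2) = A + B := by
      rw [show (1-r^2) = (1+r)*(1-r) by ring, Real.log_mul h1p.ne' h1m.ne']
    have f1 : Real.exp ((A-B)/2) * (1-r) = Real.exp ((A+B)/2) := by
      rw [show (A-B)/2 = (A+B)/2 - B by ring, Real.exp_sub, hB, Real.exp_log h1m]
      field_simp
    have f2 : Real.exp ((B-A)/2) * (1+r) = Real.exp ((A+B)/2) := by
      rw [show (B-A)/2 = (A+B)/2 - A by ring, Real.exp_sub, hA, Real.exp_log h1p]
      field_simp
    rw [e1, e2, hlr]
    nlinarith [f1, f2]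
  -- bound on δ
  have hs0 : 0 < |r| := lt_of_lt_of_le hγ0 hr1
  have habs_log : |Real.log ((1+r)/(1-r))| = Real.log ((1+|r|)/(1-|r|)) := by
    rcases le_or_gt 0 r with h | h
    · rw [abs_of_nonneg h]
      exact abs_of_nonneg (Real.log_nonneg ((one_le_div h1m).mpr (by linarith)))
    · rw [abs_of_neg h]
      have hle : Real.log ((1+r)/(1-r)) ≤ 0 :=
        Real.log_nonpos (by positivity) ((div_le_one h1m).mpr (by linarith))
      rw [abs_of_nonpos hle, ← Real.log_inv]
      congr 1
      rw [inv_div]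
      ring_nf
  set L2 := Real.log ((1+|r|)/(1-|r|)) with hL2
  have hαabs : |α| = L2 / (2*p) := by
    rw [hα, abs_mul, abs_of_nonneg (by positivity : (0:ℝ) ≤ 1/(2*p)), habs_log]
    ring
  have hlog_nonneg : 0 ≤ Real.log ((1+|r|)/(1-|r|)) := by
    apply Real.log_nonneg
    rw [le_div_iff₀ (by linarith : (0:ℝ) < 1 - |r|)]
    linarith [hs0]
  have hδ2 : δ ≤ (a*γ/2) * Real.log ((1+|r|)/(1-|r|)) := by
    have h1 : ω * |α| ≤ (a*γ*p) * |α| := mul_le_mul_of_nonneg_right hωp (abs_nonneg α)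
    have h2 : (a*γ*p) * |α| = (a*γ/2) * L2 := by
      rw [hαabs]; field_simp
    linarith
  have hrr : (1:ℝ) - r^2 = 1 - |r|^2 := by rw [sq_abs]
  -- combine
  have hexp : δ + Real.log (1 - r^2)/2 ≤ -(a*γ*γ^2)/2 := by
    rw [hrr]
    have := key_ineq a γ |r| hγ0 hγ1 ha0 ha1 hr1 hr2
    linarith
  calc ∑ j, v j * Real.exp (-α * x j + δ)
      = Real.exp δ * ∑ j, v j * Real.exp (-(α * x j)) := hsplit
    _ ≤ Real.exp δ * Real.exp (Real.log (1 - r^2)/2) := by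
        apply mul_le_mul_of_nonneg_left _ (Real.exp_nonneg δ)
        rw [← hval]; exact hinner
    _ = Real.exp (δ + Real.log (1 - r^2)/2) := (Real.exp_add _ _).symm
    _ ≤ Real.exp (-(a*γ*γ^2)/2) := Real.exp_le_exp.mpr hexp

/-- Theorem 5 (boosting with lasso): running `Ω-R.AdaBoost` with
`Ω = ‖·‖₁`, `ω = a γ_WL min_k max_j |π_{j,k}|` (for `0 < a < 3/11`) and a
`γ_WL`-weak learner, the returned classifier `θ_T` satisfies
`(1/n) Σ_j exp(−θ_T·π_j + ω‖θ_T‖₁) ≤ exp(−a γ_WL T γ_WL²/2)`. -/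
theorem stmt19 (n d T : ℕ) (hn : 1 ≤ n) (hd : 1 ≤ d) (hT : 1 ≤ T)
    (π : Fin n → Fin d → ℝ)
    -- `π_{*k} = max_j |π_{j,k}| > 0`
    (πs : Fin d → ℝ) (hπs : ∀ k, πs k = ⨆ j : Fin n, |π j k|)
    (hπs_pos : ∀ k, 0 < πs k)
    (γ : ℝ) (hγ0 : 0 < γ) (hγ1 : γ < 1)
    (a : ℝ) (ha0 : 0 < a) (ha1 : a < 3 / 11)
    (ω : ℝ) (hω : ω = a * γ * ⨅ k : Fin d, πs k)
    (ι : Fin T → Fin d)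
    (θ : ℕ → Fin d → ℝ) (hθ0 : θ 0 = 0)
    (w : ℕ → Fin n → ℝ) (hw0 : ∀ j, w 0 j = 1 / n)
    (r α δ Z : Fin T → ℝ)
    -- expected edge
    (hr : ∀ t : Fin T, r t = (1 / πs (ι t)) * ∑ j, w t.val j * π j (ι t))
    -- `γ_WL`-weak learner: `γ ≤ |r_t| < 1`
    (hweak : ∀ t : Fin T, γ ≤ |r t| ∧ |r t| < 1)
    -- leveraging coefficient, classifier update, regularization increment,
    -- normalizer, weight update
    (hα : ∀ t : Fin T,
      α t = (1 / (2 * πs (ι t))) * Real.log ((1 + r t) / (1 - r t)))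
    (hθ : ∀ t : Fin T,
      θ (t.val + 1) = θ t.val + α t • (Pi.single (ι t) 1 : Fin d → ℝ))
    (hδ : ∀ t : Fin T,
      δ t = ω * ((∑ k, |θ (t.val + 1) k|) - ∑ k, |θ t.val k|))
    (hZ : ∀ t : Fin T,
      Z t = ∑ j, w t.val j * Real.exp (-α t * π j (ι t) + δ t))
    (hw : ∀ t : Fin T, ∀ j,
      w (t.val + 1) j = w t.val j * Real.exp (-α t * π j (ι t) + δ t) / Z t) :
    (1 / n) * ∑ j, Real.exp (-(∑ k, θ T k * π j k) + ω * ∑ k, |θ T k|) ≤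
      Real.exp (-(a * γ * T * γ ^ 2) / 2) := by
  have hnpos : 0 < n := hn
  have hdpos : 0 < d := hd
  haveI : NeZero n := ⟨hnpos.ne'⟩
  haveI : NeZero d := ⟨hdpos.ne'⟩
  have hnnz : (n:ℝ) ≠ 0 := Nat.cast_ne_zero.mpr hnpos.ne'
  -- |π j k| ≤ πs k
  have habs : ∀ j k, |π j k| ≤ πs k := by
    intro j k
    rw [hπs k]
    exact le_ciSup (f := fun j : Fin n => |π j k|)
      (Set.Finite.bddAbove (Set.finite_range _)) j
  -- ω facts
  obtain ⟨k₀, hk₀⟩ := Finite.exists_min πs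
  have hinf : (⨅ k : Fin d, πs k) = πs k₀ :=
    le_antisymm (ciInf_le (Set.Finite.bddBelow (Set.finite_range _)) k₀)
      (le_ciInf fun k => hk₀ k)
  have hω0 : 0 ≤ ω := by
    rw [hω, hinf]
    have := hπs_pos k₀
    positivity
  have hωle : ∀ k, ω ≤ a * γ * πs k := by
    intro k
    rw [hω, hinf]
    exact mul_le_mul_of_nonneg_left (hk₀ k) (by positivity)
  -- positivity and normalization of weights
  have W : ∀ t : ℕ, t ≤ T → (∀ j, 0 < w t j) ∧ (∑ j, w t j = 1) := by
    intro t
    induction t with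
    | zero =>
      intro _
      constructor
      · intro j
        rw [hw0 j]
        positivity
      · simp only [hw0]
        rw [Finset.sum_const, Finset.card_univ, Fintype.card_fin, nsmul_eq_mul]
        field_simp
    | succ t ih =>
      intro ht
      have htT : t < T := ht
      obtain ⟨hpos, hsum⟩ := ih (le_of_lt htT)
      have hwt := hw ⟨t, htT⟩
      have hZt := hZ ⟨t, htT⟩
      simp only [Fin.val_mk] at hwt hZt
      have hZpos : 0 < Z ⟨t, htT⟩ := by
        rw [hZt]
        apply Finset.sum_pos
        · intro j _
          have := hpos j
          positivity
        · exact Finset.univ_nonempty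
      constructor
      · intro j
        rw [hwt j]
        have := hpos j
        positivity
      · rw [Finset.sum_congr rfl fun j _ => hwt j, ← Finset.sum_div, ← hZt,
          div_self hZpos.ne']
  -- positivity of Z
  have hZpos : ∀ t : Fin T, 0 < Z t := by
    intro t
    rw [hZ t]
    apply Finset.sum_pos
    · intro j _
      have := ((W t.val (le_of_lt t.isLt)).1 j)
      positivity
    · exact Finset.univ_nonempty
  -- extended normalizer
  set Z' : ℕ → ℝ := fun s => if h : s < T then Z ⟨s, h⟩ else 1 with hZ'
  -- telescoping identity
  have B : ∀ t : ℕ, t ≤ T → ∀ j, (∏ s ∈ Finset.range t, Z' s) * w t j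
      = (1/n) * Real.exp (-(∑ k, θ t k * π j k) + ω * ∑ k, |θ t k|) := by
    intro t
    induction t with
    | zero =>
      intro _ j
      simp [hθ0, hw0 j]
    | succ t ih =>
      intro ht j
      have htT : t < T := ht
      set τ : Fin T := ⟨t, htT⟩ with hτ
      have hwt := hw τ j
      have hθt := hθ τ
      have hδt := hδ τ
      simp only [hτ, Fin.val_mk] at hwt hθt hδt
      have hZdif : Z' t = Z τ := dif_pos htT
      have hZτpos : 0 < Z τ := hZpos τ
      have hsum1 : ∑ k, θ (t+1) k * π j k
          = (∑ k, θ t k * π j k) + α τ * π j (ι τ) := by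
        rw [hθt]
        simp only [Pi.add_apply, Pi.smul_apply, smul_eq_mul, add_mul]
        rw [Finset.sum_add_distrib]
        congr 1
        have hterm : ∀ k : Fin d, α ⟨t, htT⟩ * (Pi.single (ι ⟨t, htT⟩) 1 : Fin d → ℝ) k * π j k
            = if k = ι ⟨t, htT⟩ then α ⟨t, htT⟩ * π j k else 0 := by
          intro k
          rw [Pi.single_apply]
          rcases eq_or_ne k (ι ⟨t, htT⟩) with hk | hk
          · simp [hk]
          · simp [hk]
        rw [Finset.sum_congr rfl fun k _ => hterm k]
        simp [Finset.sum_ite_eq']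
        rfl
      have hsum2 : ω * ∑ k, |θ (t+1) k| = ω * ∑ k, |θ t k| + δ τ := by
        rw [hδt]; ring
      calc (∏ s ∈ Finset.range (t+1), Z' s) * w (t+1) j
          = ((∏ s ∈ Finset.range t, Z' s) * w t j)
              * Real.exp (-α τ * π j (ι τ) + δ τ) := by
            rw [Finset.prod_range_succ, hZdif, hwt, ← hτ]
            field_simp
        _ = (1/n) * Real.exp (-(∑ k, θ t k * π j k) + ω * ∑ k, |θ t k|)
              * Real.exp (-α τ * π j (ι τ) + δ τ) := by
            rw [ih (le_of_lt htT) j]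
        _ = (1/n) * Real.exp (-(∑ k, θ (t+1) k * π j k) + ω * ∑ k, |θ (t+1) k|) := by
            rw [mul_assoc, ← Real.exp_add]
            congr 2
            rw [hsum1, hsum2]
            ring
  -- δ bound
  have hδle : ∀ t : Fin T, δ t ≤ ω * |α t| := by
    intro t
    rw [hδ t]
    have hstep : ∀ k, |θ (t.val+1) k| ≤ |θ t.val k| + (if k = ι t then |α t| else 0) := by
      intro k
      rw [hθ t]
      simp only [Pi.add_apply, Pi.smul_apply, smul_eq_mul, Pi.single_apply]
      rcases eq_or_ne k (ι t) with hk | hk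
      · simp only [hk, eq_self_iff_true, if_true, mul_one]
        exact abs_add_le _ _
      · simp [hk]
    have hsumle : ∑ k, |θ (t.val+1) k| ≤ (∑ k, |θ t.val k|) + |α t| := by
      calc ∑ k, |θ (t.val+1) k|
          ≤ ∑ k, (|θ t.val k| + (if k = ι t then |α t| else 0)) :=
            Finset.sum_le_sum fun k _ => hstep k
        _ = (∑ k, |θ t.val k|) + |α t| := by
            rw [Finset.sum_add_distrib, Finset.sum_ite_eq' Finset.univ (ι t)]
            simp
    exact mul_le_mul_of_nonneg_left (by linarith) hω0
  -- per-step bound on Z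
  have hZle : ∀ t : Fin T, Z t ≤ Real.exp (-(a*γ*γ^2)/2) := by
    intro t
    rw [hZ t]
    exact step_bound (πs (ι t)) (hπs_pos (ι t)) (fun j => π j (ι t))
      (fun j => habs j (ι t)) (w t.val)
      (fun j => ((W t.val (le_of_lt t.isLt)).1 j).le) ((W t.val (le_of_lt t.isLt)).2)
      γ a (r t) ω (α t) (δ t) hγ0 hγ1 ha0 ha1 (hr t) (hweak t).1 (hweak t).2
      hω0 (hωle (ι t)) (hα t) (hδle t)
  -- assemble
  have hfinal : (1/n) * ∑ j, Real.exp (-(∑ k, θ T k * π j k) + ω * ∑ k, |θ T k|)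
      = ∏ t : Fin T, Z t := by
    have h1 : ∑ j, (∏ s ∈ Finset.range T, Z' s) * w T j
        = ∑ j, (1/n) * Real.exp (-(∑ k, θ T k * π j k) + ω * ∑ k, |θ T k|) :=
      Finset.sum_congr rfl fun j _ => B T le_rfl j
    rw [← Finset.mul_sum, (W T le_rfl).2, mul_one, ← Finset.mul_sum] at h1
    rw [← h1, ← Fin.prod_univ_eq_prod_range]
    apply Finset.prod_congr rfl
    intro t _
    simp only [hZ']
    rw [dif_pos t.isLt]
  rw [hfinal]
  calc ∏ t : Fin T, Z t
      ≤ ∏ t : Fin T, Real.exp (-(a*γ*γ^2)/2) :=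
        Finset.prod_le_prod (fun t _ => (hZpos t).le) (fun t _ => hZle t)
    _ = Real.exp (-(a*γ*γ^2)/2) ^ T := by
        rw [Finset.prod_const, Finset.card_univ, Fintype.card_fin]
    _ = Real.exp (-(a * γ * T * γ ^ 2) / 2) := by
        rw [← Real.exp_nat_mul]
        congr 1
        ring
end
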